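/- arXiv:1509.04372 — 3 statements merged into one kernel-verified Lean document; each statement's English description precedes it below -/
import Mathlib

section
/- For all integers n ≥ 1 and q ≥ 2, the q-liminf density of the (n+1)-st Zimin word satisfies underlineδ(Z_{n+1}, q) ≥ 1 / ((f(n,q) − 2^n + 2)² · q^{f(n,q)+1}). -/
open Filter

/-- `U` is an instance of `V`: image of `V` under a nonerasing substitution. -/
def IsInstance {Γ β : Type*} (V : List Γ) (U : List β) : Prop :=
  ∃ φ : Γ → List β, (∀ x ∈ V, φ x ≠ []) ∧ U = (V.map φ).flatten

/-- `W` encounters `V`: some factor of `W` is an instance of `V`. -/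
def Encounters {Γ β : Type*} (V : List Γ) (W : List β) : Prop :=
  ∃ U : List β, U <:+: W ∧ IsInstance V U

/-- Zimin words over alphabet ℕ. -/
def Zimin : ℕ → List ℕ
  | 0 => []
  | n + 1 => Zimin n ++ [n] ++ Zimin n

/-- Least M such that every q-ary word of length M encounters Z_n. -/
noncomputable def fZ (n q : ℕ) : ℕ :=
  sInf {M | ∀ W : List (Fin q), W.length = M → Encounters (Zimin n) W}

/-- Exponential tower with b copies of a. -/
def tower (a : ℕ) : ℕ → ℕ
  | 0 => 1
  | b + 1 => a ^ tower a b

/-- Number of length-M q-ary words that are instances of V. -/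
noncomputable def instCount (V : List ℕ) (q M : ℕ) : ℕ :=
  Nat.card {W : Fin M → Fin q // IsInstance V (List.ofFn W)}

/-- Factor density d(V,W). -/
noncomputable def factorDensity {α : Type*} [DecidableEq α] (V W : List α) : ℝ :=
  (((((Finset.range (W.length + 1)) ×ˢ (Finset.range (W.length + 1))).filter
      (fun p => p.1 < p.2 ∧ (W.drop p.1).take (p.2 - p.1) = V)).card : ℝ)) /
    ((W.length : ℝ) + 1 - (V.length : ℝ))

/-- Number of substrings of W (given by position pairs) that are V-instances. -/
noncomputable def instSubCount {Γ β : Type*} (V : List Γ) (W : List β) : ℕ :=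
  Nat.card {p : ℕ × ℕ //
    p.1 < p.2 ∧ p.2 ≤ W.length ∧ IsInstance V ((W.drop p.1).take (p.2 - p.1))}

/-- Instance density δ(V,W). -/
noncomputable def instDensity {Γ β : Type*} (V : List Γ) (W : List β) : ℝ :=
  (instSubCount V W : ℝ) / ((W.length + 1).choose 2 : ℝ)

/-- q-liminf density of V. -/
noncomputable def liminfDensity {Γ : Type*} (V : List Γ) (q : ℕ) : ℝ :=
  Filter.liminf (fun W : List (Fin q) => instDensity V W) (Filter.comap List.length Filter.atTop)

/-- Expected instance density of V in a uniformly random q-ary word of length n. -/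
noncomputable def expDensity {Γ : Type*} (V : List Γ) (q n : ℕ) : ℝ :=
  (∑ W : Fin n → Fin q, instDensity V (List.ofFn W)) / (q : ℝ) ^ n

/-- Variance of the instance density of V in a uniformly random q-ary word of length n. -/
noncomputable def varDensity {Γ : Type*} (V : List Γ) (q n : ℕ) : ℝ :=
  (∑ W : Fin n → Fin q, (instDensity V (List.ofFn W) - expDensity V q n) ^ 2) / (q : ℝ) ^ n

/-- Probability that a uniformly random q-ary word of length n is a V-instance. -/
noncomputable def instProb {Γ : Type*} (V : List Γ) (q n : ℕ) : ℝ :=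
  (Nat.card {W : Fin n → Fin q // IsInstance V (List.ofFn W)} : ℝ) / (q : ℝ) ^ n

/-- V is doubled: every letter occurring in V occurs at least twice. -/
def Doubled {Γ : Type*} [DecidableEq Γ] (V : List Γ) : Prop :=
  ∀ x ∈ V, 2 ≤ V.count x

/-- Number of letter recurrences ‖V‖ = |V| - |L(V)|. -/
def recurCount {Γ : Type*} [DecidableEq Γ] (V : List Γ) : ℕ :=
  V.length - V.dedup.length

lemma zimin_length (n : ℕ) : (Zimin n).length = 2 ^ n - 1 := by
  induction n with
  | zero => simp [Zimin]
  | succ n ih =>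
    have h2 : 1 ≤ 2 ^ n := Nat.one_le_two_pow
    simp [Zimin, ih, pow_succ]
    omega

lemma zimin_mem_lt {n x : ℕ} (hx : x ∈ Zimin n) : x < n := by
  induction n with
  | zero => exact absurd hx (by rw [Zimin]; simp)
  | succ n ih =>
    rw [Zimin] at hx
    rcases List.mem_append.1 hx with h | h
    · rcases List.mem_append.1 h with h | h
      · exact Nat.lt_succ_of_lt (ih h)
      · simp at h; omega
    · exact Nat.lt_succ_of_lt (ih h)

lemma isInstance_length {Γ β : Type*} {V : List Γ} {U : List β}
    (h : IsInstance V U) : V.length ≤ U.length := by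
  obtain ⟨φ, hφ, rfl⟩ := h
  induction V with
  | nil => simp
  | cons x V ih =>
    simp only [List.map_cons, List.flatten_cons, List.length_append]
    have h1 : 1 ≤ (φ x).length := by
      have := hφ x (by simp)
      exact List.length_pos_iff.mpr this
    have h2 := ih (fun y hy => hφ y (by simp [hy]))
    simp only [List.length_cons]
    omega

lemma split3 {β : Type*} (W : List β) (a b a' b' : ℕ) (hab : a ≤ b) (hba' : b ≤ a')
    (ha'b' : a' ≤ b') :
    (W.drop a).take (b' - a) =
      (W.drop a).take (b - a) ++ (W.drop b).take (a' - b) ++ (W.drop a').take (b' - a') := by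
  have h1 : b' - a = (b - a) + ((a' - b) + (b' - a')) := by omega
  have e1 : a + (b - a) = b := by omega
  have e2 : b + (a' - b) = a' := by omega
  rw [h1, List.take_add, List.take_add, List.drop_drop, e1, List.drop_drop, e2,
    List.append_assoc]

lemma isInstance_glue {β : Type*} {n : ℕ} {U Mid : List β}
    (hU : IsInstance (Zimin n) U) (hM : Mid ≠ []) :
    IsInstance (Zimin (n + 1)) (U ++ Mid ++ U) := by
  obtain ⟨φ, hφ, rfl⟩ := hU
  refine ⟨fun x => if x = n then Mid else φ x, ?_, ?_⟩
  · intro x hx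
    rw [Zimin] at hx
    rcases List.mem_append.1 hx with h | h
    · rcases List.mem_append.1 h with h | h
      · have hne : x ≠ n := Nat.ne_of_lt (zimin_mem_lt h)
        simpa [hne] using hφ x h
      · simp at h; subst h; simp [hM]
    · have hne : x ≠ n := Nat.ne_of_lt (zimin_mem_lt h)
      simpa [hne] using hφ x h
  · have hmap : (Zimin n).map (fun x => if x = n then Mid else φ x) = (Zimin n).map φ := by
      apply List.map_congr_left
      intro x hx
      rw [if_neg (Nat.ne_of_lt (zimin_mem_lt hx))]
    rw [Zimin]
    simp [hmap]

lemma encounters_pos {Γ β : Type*} {V : List Γ} {X : List β} (h : Encounters V X) :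
    ∃ p u, p + u ≤ X.length ∧ IsInstance V ((X.drop p).take u) := by
  obtain ⟨U, ⟨s, t, hst⟩, hU⟩ := h
  refine ⟨s.length, U.length, ?_, ?_⟩
  · rw [← hst]; simp
  · have h1 : X.drop s.length = U ++ t := by
      rw [← hst, List.append_assoc, List.drop_left]
    rw [h1, List.take_left]
    exact hU

lemma window_instance {Γ β : Type*} {V : List Γ} {W : List β} {i f' : ℕ} (hif : i + f' ≤ W.length)
    (h : Encounters V ((W.drop i).take f')) :
    ∃ a b, i ≤ a ∧ a + V.length ≤ b ∧ b ≤ i + f' ∧ IsInstance V ((W.drop a).take (b - a)) := by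
  obtain ⟨p, u, hpu, hinst⟩ := encounters_pos h
  have hlen : ((W.drop i).take f').length = f' := by
    rw [List.length_take, List.length_drop]; omega
  rw [hlen] at hpu
  have hfac : (((W.drop i).take f').drop p).take u = (W.drop (i + p)).take u := by
    rw [List.drop_take, List.drop_drop, List.take_take]
    congr 1
    omega
  rw [hfac] at hinst
  have hVlen : V.length ≤ u := by
    have h2 := isInstance_length hinst
    rw [List.length_take] at h2
    omega
  have hfac2 : (W.drop (i + p)).take u = (W.drop (i + p)).take ((i + p + u) - (i + p)) := by
    congr 1; omega
  exact ⟨i + p, i + p + u, by omega, by omega, by omega, by rw [← hfac2]; exact hinst⟩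

lemma take_drop_infix {β : Type*} (W : List β) (a k : ℕ) : (W.drop a).take k <:+: W :=
  (List.take_prefix _ _).isInfix.trans (List.drop_suffix a W).isInfix

lemma zimin_exists (q : ℕ) (hq : 1 ≤ q) (n : ℕ) :
    ∃ M, ∀ W : List (Fin q), W.length = M → Encounters (Zimin n) W := by
  induction n with
  | zero =>
    refine ⟨0, fun W _ => ⟨[], List.nil_infix, fun _ => [], ?_, ?_⟩⟩
    · intro x hx; rw [Zimin] at hx; simp at hx
    · rw [Zimin]; simp
  | succ n ih =>
    obtain ⟨M, hM⟩ := ih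
    set B := q ^ M * (M + 1) + 1 with hB
    refine ⟨B * (M + 1), ?_⟩
    intro W hW
    have hmul : ∀ i, i < B → i * (M + 1) + (M + 1) ≤ B * (M + 1) := by
      intro i hi
      have h1 : i + 1 ≤ B := hi
      have := Nat.mul_le_mul_right (M + 1) h1
      nlinarith
    have hwin : ∀ i, i < B → ∃ a b, i * (M + 1) ≤ a ∧ a + (Zimin n).length ≤ b ∧
        b ≤ i * (M + 1) + M ∧ IsInstance (Zimin n) ((W.drop a).take (b - a)) := by
      intro i hi
      have hif : i * (M + 1) + M ≤ W.length := by
        rw [hW]; have := hmul i hi; omega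
      exact window_instance hif (hM _ (by rw [List.length_take, List.length_drop]; omega))
    choose! A Bf h1 h2 h3 h4 using hwin
    classical
    let d : Fin q := ⟨0, hq⟩
    set wrd : ℕ → List (Fin q) := fun i => (W.drop (A i)).take (Bf i - A i) with hwrd
    set enc : ℕ → (Fin M → Fin q) × Fin (M + 1) := fun i =>
      (fun j => (wrd i).getD j d, ⟨min (wrd i).length M, by omega⟩) with henc
    have hcard : (Finset.univ : Finset ((Fin M → Fin q) × Fin (M + 1))).card
        < (Finset.range B).card := by
      simp [Finset.card_univ, hB]
    obtain ⟨i, hi, j, hj, hij, he⟩ :=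
      Finset.exists_ne_map_eq_of_card_lt_of_maps_to hcard
        (fun i _ => Finset.mem_univ (enc i))
    simp only [Finset.mem_range] at hi hj
    suffices key : ∀ i j, i < B → j < B → i < j → enc i = enc j →
        Encounters (Zimin (n + 1)) W by
      rcases lt_or_gt_of_ne hij with h | h
      · exact key i j hi hj h he
      · exact key j i hj hi h he.symm
    clear hi hj hij he i j
    intro i j hi hj hlt he
    have hlenle : ∀ i, i < B → (wrd i).length ≤ M := by
      intro i hi
      rw [hwrd]
      simp only [List.length_take]
      have := h2 i hi; have := h3 i hi; have := h1 i hi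
      omega
    have hweq : wrd i = wrd j := by
      have he1 : (enc i).2 = (enc j).2 := by rw [he]
      have he2 : (enc i).1 = (enc j).1 := by rw [he]
      have hli := hlenle i hi
      have hlj := hlenle j hj
      simp only [henc, Fin.mk.injEq] at he1
      have hll : (wrd i).length = (wrd j).length := by omega
      apply List.ext_getElem hll
      intro k hk1 hk2
      have hkM : k < M := lt_of_lt_of_le hk1 hli
      have := congrFun he2 ⟨k, hkM⟩
      simp only [henc] at this
      rwa [List.getD_eq_getElem _ _ hk1, List.getD_eq_getElem _ _ hk2] at this
    -- positions
    have hii := hmul i hi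
    have hjj := hmul j hj
    have hsucc : (i + 1) * (M + 1) ≤ j * (M + 1) := Nat.mul_le_mul_right _ hlt
    have hexp : (i + 1) * (M + 1) = i * (M + 1) + (M + 1) := by ring
    have hba' : Bf i < A j := by
      have := h3 i hi; have := h1 j hj; omega
    have hMid : (W.drop (Bf i)).take (A j - Bf i) ≠ [] := by
      have hlen : ((W.drop (Bf i)).take (A j - Bf i)).length > 0 := by
        rw [List.length_take, List.length_drop, hW]
        have := h3 i hi
        have haj : A j + (Zimin n).length ≤ Bf j := h2 j hj
        have hbj : Bf j ≤ j * (M + 1) + M := h3 j hj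
        omega
      exact List.ne_nil_of_length_pos hlen
    have hsplit := split3 W (A i) (Bf i) (A j) (Bf j)
      (by have := h2 i hi; omega) (le_of_lt hba') (by have := h2 j hj; omega)
    refine ⟨(W.drop (A i)).take (Bf j - A i), take_drop_infix W _ _, ?_⟩
    rw [hsplit]
    have heq2 : List.take (Bf j - A j) (List.drop (A j) W)
        = List.take (Bf i - A i) (List.drop (A i) W) := hweq.symm
    rw [heq2]
    exact isInstance_glue (h4 i hi) hMid

lemma fZ_spec (n q : ℕ) (hq : 1 ≤ q) :
    ∀ W : List (Fin q), W.length = fZ n q → Encounters (Zimin n) W :=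
  Nat.sInf_mem (zimin_exists q hq n)

lemma fZ_lb (n q : ℕ) (hq : 1 ≤ q) : 2 ^ n - 1 ≤ fZ n q := by
  have h := fZ_spec n q hq (List.replicate (fZ n q) ⟨0, hq⟩) (by simp)
  obtain ⟨U, hinf, hinst⟩ := h
  have h1 : (Zimin n).length ≤ U.length := isInstance_length hinst
  have h2 : U.length ≤ fZ n q := by
    have := hinf.length_le
    simpa using this
  rw [zimin_length] at h1
  omega

def valq {q : ℕ} : List (Fin q) → ℕ
  | [] => 0
  | d :: l => d.val + q * valq l

lemma valq_lt {q : ℕ} (hq : 1 ≤ q) : ∀ l : List (Fin q), valq l < q ^ l.length := by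
  intro l
  induction l with
  | nil => simp [valq]
  | cons d l ih =>
    have hd := d.isLt
    simp only [valq, List.length_cons, pow_succ]
    calc d.val + q * valq l < q + q * valq l := by omega
      _ = q * (valq l + 1) := by ring
      _ ≤ q * q ^ l.length := by
        apply Nat.mul_le_mul_left
        omega
      _ = q ^ l.length * q := by ring

lemma valq_inj {q : ℕ} : ∀ u v : List (Fin q), u.length = v.length →
    valq u = valq v → u = v := by
  intro u
  induction u with
  | nil => intro v hl _; exact (List.length_eq_zero_iff.mp hl.symm).symm ▸ rfl
  | cons d u ih =>
    intro v hl hv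
    match v with
    | [] => simp at hl
    | e :: v =>
      simp only [List.length_cons, Nat.add_right_cancel_iff] at hl
      simp only [valq] at hv
      have hd := d.isLt
      have he := e.isLt
      have hq0 : 0 < q := by omega
      have hmod : d.val = e.val := by
        have h1 : (d.val + q * valq u) % q = d.val := by
          rw [Nat.add_mul_mod_self_left, Nat.mod_eq_of_lt hd]
        have h2 : (e.val + q * valq v) % q = e.val := by
          rw [Nat.add_mul_mod_self_left, Nat.mod_eq_of_lt he]
        rw [← h1, ← h2, hv]
      have hde : d = e := Fin.ext hmod
      have hval : valq u = valq v := by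
        rw [hmod] at hv
        have := Nat.eq_of_mul_eq_mul_left hq0 (by omega : q * valq u = q * valq v)
        exact this
      rw [hde, ih v hl hval]

lemma geomSumLe {q : ℕ} (hq : 2 ≤ q) : ∀ m, (∑ l ∈ Finset.range m, q ^ l) ≤ q ^ m := by
  intro m
  induction m with
  | zero => simp
  | succ m ih =>
    rw [Finset.sum_range_succ, pow_succ]
    have h1 : 1 ≤ q ^ m := Nat.one_le_pow _ _ (by omega)
    nlinarith

noncomputable def codeq {q : ℕ} (u : List (Fin q)) : ℕ :=
  (∑ l ∈ Finset.range u.length, q ^ l) + valq u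

lemma codeq_inj {q : ℕ} (hq : 2 ≤ q) : ∀ u v : List (Fin q), codeq u = codeq v → u = v := by
  have key : ∀ u v : List (Fin q), u.length < v.length → codeq u < codeq v := by
    intro u v hl
    unfold codeq
    have h1 : valq u < q ^ u.length := valq_lt (by omega) u
    have h2 : (∑ l ∈ Finset.range (u.length + 1), q ^ l) ≤ ∑ l ∈ Finset.range v.length, q ^ l := by
      apply Finset.sum_le_sum_of_subset
      exact Finset.range_subset_range.mpr hl
    rw [Finset.sum_range_succ] at h2
    omega
  intro u v h
  rcases lt_trichotomy u.length v.length with hl | hl | hl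
  · exact absurd h (Nat.ne_of_lt (key u v hl))
  · exact valq_inj u v hl (by unfold codeq at h; rw [hl] at h; omega)
  · exact absurd h.symm (Nat.ne_of_lt (key v u hl))

lemma codeq_lt {q : ℕ} (hq : 2 ≤ q) {f : ℕ} {u : List (Fin q)} (hu : u.length ≤ f) :
    codeq u < q ^ (f + 1) := by
  unfold codeq
  have h1 : valq u < q ^ u.length := valq_lt (by omega) u
  have h2 : (∑ l ∈ Finset.range (u.length + 1), q ^ l) ≤ ∑ l ∈ Finset.range (f + 1), q ^ l := by
    apply Finset.sum_le_sum_of_subset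
    exact Finset.range_subset_range.mpr (by omega)
  rw [Finset.sum_range_succ] at h2
  have h3 := geomSumLe hq (f + 1)
  omega

lemma le_instSubCount {Γ β : Type*} (V : List Γ) (W : List β) (P : Finset (ℕ × ℕ))
    (g : ℕ × ℕ → ℕ × ℕ) (hinj : Set.InjOn g ↑P)
    (hmem : ∀ p ∈ P, (g p).1 < (g p).2 ∧ (g p).2 ≤ W.length ∧
      IsInstance V ((W.drop (g p).1).take ((g p).2 - (g p).1))) :
    P.card ≤ instSubCount V W := by
  set Qs : Set (ℕ × ℕ) := {p : ℕ × ℕ |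
    p.1 < p.2 ∧ p.2 ≤ W.length ∧ IsInstance V ((W.drop p.1).take (p.2 - p.1))} with hQs
  have hfin : Qs.Finite := by
    apply Set.Finite.subset ((Finset.range (W.length + 1) ×ˢ Finset.range (W.length + 1)).finite_toSet)
    intro p hp
    simp only [hQs, Set.mem_setOf_eq] at hp
    simp only [Finset.coe_product, Set.mem_prod, Finset.mem_coe, Finset.mem_range]
    omega
  have h1 : instSubCount V W = Qs.ncard := by
    rw [← Nat.card_coe_set_eq]
    rfl
  have h2 : g '' ↑P ⊆ Qs := by
    rintro _ ⟨p, hp, rfl⟩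
    exact hmem p hp
  calc P.card = (↑P : Set (ℕ × ℕ)).ncard := (Set.ncard_coe_finset P).symm
    _ = (g '' ↑P).ncard := (Set.ncard_image_of_injOn hinj).symm
    _ ≤ Qs.ncard := Set.ncard_le_ncard h2 hfin
    _ = instSubCount V W := h1.symm

lemma instSubCount_le {Γ β : Type*} (V : List Γ) (W : List β) :
    instSubCount V W ≤ (W.length + 1) ^ 2 := by
  set Qs : Set (ℕ × ℕ) := {p : ℕ × ℕ |
    p.1 < p.2 ∧ p.2 ≤ W.length ∧ IsInstance V ((W.drop p.1).take (p.2 - p.1))} with hQs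
  have hsub : Qs ⊆ ↑(Finset.range (W.length + 1) ×ˢ Finset.range (W.length + 1)) := by
    intro p hp
    simp only [hQs, Set.mem_setOf_eq] at hp
    simp only [Finset.coe_product, Set.mem_prod, Finset.mem_coe, Finset.mem_range]
    omega
  have h1 : instSubCount V W = Qs.ncard := by
    rw [← Nat.card_coe_set_eq]
    rfl
  rw [h1]
  calc Qs.ncard ≤ (↑(Finset.range (W.length + 1) ×ˢ Finset.range (W.length + 1)) : Set (ℕ × ℕ)).ncard :=
        Set.ncard_le_ncard hsub (Finset.finite_toSet _)
    _ = (W.length + 1) ^ 2 := by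
        rw [Set.ncard_coe_finset]
        simp [sq]

lemma key_count (n q : ℕ) (hn : 1 ≤ n) (hq : 2 ≤ q) (W : List (Fin q))
    (hL : fZ n q ≤ W.length) :
    (W.length - fZ n q + 1) ^ 2 ≤
      (fZ n q + 2 - 2 ^ n) ^ 2 * q ^ (fZ n q + 1) *
        (2 * instSubCount (Zimin (n + 1)) W +
          (2 * fZ n q + 1) * (W.length - fZ n q + 1)) := by
  classical
  set f := fZ n q with hf
  set L := W.length with hLdef
  set T := L - f + 1 with hT
  have h2n : 2 ≤ 2 ^ n := by
    calc 2 = 2 ^ 1 := (pow_one 2).symm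
      _ ≤ 2 ^ n := Nat.pow_le_pow_right (by omega) hn
  have hf2n : 2 ^ n - 1 ≤ f := fZ_lb n q (by omega)
  set s := f + 2 - 2 ^ n with hs
  have hs1 : 1 ≤ s := by omega
  -- windows
  have hwin : ∀ i, i < T → ∃ a b, i ≤ a ∧ a + (2 ^ n - 1) ≤ b ∧ b ≤ i + f ∧
      IsInstance (Zimin n) ((W.drop a).take (b - a)) := by
    intro i hi
    have hif : i + f ≤ L := by omega
    have h := window_instance hif (fZ_spec n q (by omega) _
      (by rw [List.length_take, List.length_drop]; omega))
    rw [zimin_length] at h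
    exact h
  choose! A Bf hA1 hA2 hA3 hA4 using hwin
  set S : Finset ℕ := (Finset.range T).image A with hS
  have hrep : ∀ a, a ∈ S → ∃ i, i < T ∧ A i = a := by
    intro a ha
    rw [hS, Finset.mem_image] at ha
    obtain ⟨i, hi, hia⟩ := ha
    exact ⟨i, Finset.mem_range.mp hi, hia⟩
  choose! I hI1 hI2 using hrep
  set E : ℕ → ℕ := fun a => Bf (I a) with hE
  set wrd : ℕ → List (Fin q) := fun a => (W.drop a).take (E a - a) with hwrd2
  -- basic facts about members of S
  have pa1 : ∀ a ∈ S, I a ≤ a := by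
    intro a ha
    have h := hA1 (I a) (hI1 a ha)
    rwa [hI2 a ha] at h
  have pa2 : ∀ a ∈ S, a + (2 ^ n - 1) ≤ E a := by
    intro a ha
    have := hA2 (I a) (hI1 a ha)
    rw [hI2 a ha] at this
    exact this
  have pa3 : ∀ a ∈ S, E a ≤ I a + f := fun a ha => hA3 (I a) (hI1 a ha)
  have pa4 : ∀ a ∈ S, IsInstance (Zimin n) (wrd a) := by
    intro a ha
    have := hA4 (I a) (hI1 a ha)
    rw [hI2 a ha] at this
    exact this
  have paL : ∀ a ∈ S, E a ≤ L := by
    intro a ha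
    have := pa3 a ha
    have := hI1 a ha
    omega
  have paf : ∀ a ∈ S, E a ≤ a + f := by
    intro a ha
    have := pa3 a ha; have := pa1 a ha; omega
  have pas : ∀ a ∈ S, a + 2 ^ n ≤ I a + f + 2 := by
    intro a ha
    have := pa2 a ha; have := pa3 a ha; omega
  have hwlen : ∀ a ∈ S, (wrd a).length = E a - a := by
    intro a ha
    rw [hwrd2]
    simp only [List.length_take, List.length_drop]
    have := paL a ha
    omega
  have hwlenf : ∀ a ∈ S, (wrd a).length ≤ f := by
    intro a ha
    rw [hwlen a ha]
    have := paf a ha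
    omega
  -- T ≤ s * S.card
  have hTm : T ≤ s * S.card := by
    have := Finset.card_le_mul_card_image (Finset.range T) s (f := A) ?_
    · rwa [Finset.card_range] at this
    · intro a ha
      have hsub : (Finset.range T).filter (fun i => A i = a) ⊆ Finset.Icc (a + 1 - s) a := by
        intro i hi
        rw [Finset.mem_filter, Finset.mem_range] at hi
        obtain ⟨hiT, hia⟩ := hi
        have h1 := hA1 i hiT
        have h2 := hA2 i hiT
        have h3 := hA3 i hiT
        rw [Finset.mem_Icc]
        omega
      calc ((Finset.range T).filter (fun i => A i = a)).card ≤ (Finset.Icc (a + 1 - s) a).card :=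
            Finset.card_le_card hsub
        _ ≤ s := by rw [Nat.card_Icc]; omega
  have hmT : S.card ≤ T := by
    calc S.card ≤ (Finset.range T).card := Finset.card_image_le
      _ = T := Finset.card_range T
  set m := S.card with hm
  -- classes
  set KS : Finset (List (Fin q)) := S.image wrd with hKS
  have hKcard : KS.card ≤ q ^ (f + 1) := by
    rw [← Finset.card_range (q ^ (f + 1))]
    apply Finset.card_le_card_of_injOn codeq
    · intro u hu
      rw [hKS, Finset.mem_coe, Finset.mem_image] at hu
      obtain ⟨a, ha, rfl⟩ := hu
      rw [Finset.mem_coe, Finset.mem_range]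
      exact codeq_lt hq (hwlenf a ha)
    · intro u _ v _ h
      exact codeq_inj hq u v h
  set t : List (Fin q) → ℕ := fun u => (S.filter (fun a => wrd a = u)).card with ht
  have hsum : ∑ u ∈ KS, t u = m := by
    rw [hm, hKS]
    exact (Finset.card_eq_sum_card_fiberwise
      (fun a ha => Finset.mem_image_of_mem wrd ha)).symm
  set SameAll := (S ×ˢ S).filter (fun p => wrd p.1 = wrd p.2) with hSA
  have hSA2 : SameAll.card = ∑ u ∈ KS, (t u) ^ 2 := by
    rw [Finset.card_eq_sum_card_fiberwise (f := fun p => wrd p.1) (t := KS) ?_]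
    · apply Finset.sum_congr rfl
      intro u hu
      have heq : SameAll.filter (fun p => wrd p.1 = u) =
          (S.filter (fun a => wrd a = u)) ×ˢ (S.filter (fun a => wrd a = u)) := by
        ext p
        simp only [hSA, Finset.mem_filter, Finset.mem_product]
        constructor
        · rintro ⟨⟨⟨hp1, hp2⟩, heq⟩, hu1⟩
          exact ⟨⟨hp1, hu1⟩, hp2, heq.symm.trans hu1⟩
        · rintro ⟨⟨hp1, hu1⟩, hp2, hu2⟩
          exact ⟨⟨⟨hp1, hp2⟩, hu1.trans hu2.symm⟩, hu1⟩
      rw [heq, Finset.card_product, ht, sq]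
    · intro p hp
      rw [hSA, Finset.mem_coe, Finset.mem_filter, Finset.mem_product] at hp
      exact Finset.mem_image_of_mem wrd hp.1.1
  set P : Finset (ℕ × ℕ) := (S ×ˢ S).filter (fun p => wrd p.1 = wrd p.2 ∧ E p.1 < p.2) with hPdef
  set Same := SameAll.filter (fun p => ¬ p.1 = p.2) with hSame
  set Diag := SameAll.filter (fun p => p.1 = p.2) with hDiagdef
  have hsplitSA : SameAll.card = Diag.card + Same.card := by
    rw [hSame, hDiagdef]
    exact (Finset.card_filter_add_card_filter_not _).symm
  have hDiag : Diag.card ≤ m := by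
    rw [hm]
    apply Finset.card_le_card_of_injOn Prod.fst
    · intro p hp
      rw [hDiagdef, Finset.mem_coe, Finset.mem_filter, hSA, Finset.mem_filter, Finset.mem_product] at hp
      exact hp.1.1.1
    · intro p hp p' hp' hpp
      simp only [Finset.mem_coe, hDiagdef, Finset.mem_filter] at hp hp'
      exact Prod.ext hpp (by rw [← hp.2, ← hp'.2, hpp])
  set Lnk := Same.filter (fun p => E p.1 < p.2 ∨ E p.2 < p.1) with hLnkdef
  set Unl := Same.filter (fun p => ¬ (E p.1 < p.2 ∨ E p.2 < p.1)) with hUnldef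
  have hsplitS : Same.card = Lnk.card + Unl.card := by
    rw [hLnkdef, hUnldef]
    exact (Finset.card_filter_add_card_filter_not _).symm
  have hmemSame : ∀ p ∈ Same, p.1 ∈ S ∧ p.2 ∈ S ∧ wrd p.1 = wrd p.2 ∧ p.1 ≠ p.2 := by
    intro p hp
    rw [hSame, Finset.mem_filter, hSA, Finset.mem_filter, Finset.mem_product] at hp
    exact ⟨hp.1.1.1, hp.1.1.2, hp.1.2, hp.2⟩
  have hUnl : Unl.card ≤ 2 * f * m := by
    have h := Finset.card_le_mul_card_image Unl (2 * f) (f := Prod.fst) ?_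
    · have h2 : (Unl.image Prod.fst).card ≤ m := by
        rw [hm]
        apply Finset.card_le_card
        intro a ha
        rw [Finset.mem_image] at ha
        obtain ⟨p, hp, rfl⟩ := ha
        rw [hUnldef, Finset.mem_filter] at hp
        exact (hmemSame p hp.1).1
      calc Unl.card ≤ 2 * f * (Unl.image Prod.fst).card := h
        _ ≤ 2 * f * m := Nat.mul_le_mul_left _ h2
    · intro a ha
      have hsub : Unl.filter (fun p => p.1 = a) ⊆
          ((Finset.Icc (a - f) (a + f)).erase a).image (fun x => (a, x)) := by
        intro p hp
        rw [Finset.mem_filter] at hp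
        obtain ⟨hpU, hpa⟩ := hp
        rw [hUnldef, Finset.mem_filter] at hpU
        obtain ⟨hpS, hpcond⟩ := hpU
        obtain ⟨h1, h2, h3, h4⟩ := hmemSame p hpS
        push_neg at hpcond
        obtain ⟨hc1, hc2⟩ := hpcond
        have hf1 : E p.1 ≤ p.1 + f := paf p.1 h1
        have hf2 : E p.2 ≤ p.2 + f := paf p.2 h2
        rw [Finset.mem_image]
        refine ⟨p.2, ?_, by rw [← hpa]⟩
        rw [Finset.mem_erase, Finset.mem_Icc]
        have hb2 : p.2 ≤ E p.1 := by omega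
        have hb1 : p.1 ≤ E p.2 := by omega
        subst hpa
        refine ⟨fun hcc => h4 (by rw [hcc]), by omega, by omega⟩
      calc (Unl.filter (fun p => p.1 = a)).card ≤
            (((Finset.Icc (a - f) (a + f)).erase a).image (fun x => (a, x))).card :=
            Finset.card_le_card hsub
        _ ≤ ((Finset.Icc (a - f) (a + f)).erase a).card := Finset.card_image_le
        _ ≤ 2 * f := by
            rw [Finset.card_erase_of_mem (by rw [Finset.mem_Icc]; omega), Nat.card_Icc]
            omega
  have hLnk : Lnk.card ≤ 2 * P.card := by
    have h := Finset.card_le_mul_card_image Lnk 2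
      (f := fun p : ℕ × ℕ => if E p.1 < p.2 then p else p.swap) ?_
    · have h2 : (Lnk.image (fun p : ℕ × ℕ => if E p.1 < p.2 then p else p.swap)) ⊆ P := by
        intro r hr
        rw [Finset.mem_image] at hr
        obtain ⟨p, hp, rfl⟩ := hr
        rw [hLnkdef, Finset.mem_filter] at hp
        obtain ⟨hpS, hpcond⟩ := hp
        obtain ⟨h1, h2, h3, h4⟩ := hmemSame p hpS
        by_cases hc : E p.1 < p.2
        · rw [if_pos hc, hPdef, Finset.mem_filter, Finset.mem_product]
          exact ⟨⟨h1, h2⟩, h3, hc⟩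
        · rw [if_neg hc, hPdef, Finset.mem_filter, Finset.mem_product]
          have hc2 : E p.2 < p.1 := by tauto
          exact ⟨⟨h2, h1⟩, h3.symm, hc2⟩
      calc Lnk.card ≤ 2 * (Lnk.image (fun p : ℕ × ℕ => if E p.1 < p.2 then p else p.swap)).card := h
        _ ≤ 2 * P.card := Nat.mul_le_mul_left _ (Finset.card_le_card h2)
    · intro r _
      have hsub : Lnk.filter (fun p => (if E p.1 < p.2 then p else p.swap) = r) ⊆ {r, r.swap} := by
        intro p hp
        rw [Finset.mem_filter] at hp
        rw [Finset.mem_insert, Finset.mem_singleton]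
        by_cases hc : E p.1 < p.2
        · rw [if_pos hc] at hp; left; exact hp.2
        · rw [if_neg hc] at hp; right; rw [← hp.2]; rfl
      calc (Lnk.filter (fun p => (if E p.1 < p.2 then p else p.swap) = r)).card ≤
            ({r, r.swap} : Finset (ℕ × ℕ)).card := Finset.card_le_card hsub
        _ ≤ 2 := Finset.card_le_two
  have hmemP : ∀ p ∈ P, p.1 ∈ S ∧ p.2 ∈ S ∧ wrd p.1 = wrd p.2 ∧ E p.1 < p.2 := by
    intro p hp
    rw [hPdef, Finset.mem_filter, Finset.mem_product] at hp
    exact ⟨hp.1.1, hp.1.2, hp.2.1, hp.2.2⟩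
  have hP : P.card ≤ instSubCount (Zimin (n + 1)) W := by
    apply le_instSubCount (Zimin (n + 1)) W P (fun p => (p.1, E p.2))
    · intro p hp p' hp' hpp
      rw [Finset.mem_coe] at hp hp'
      obtain ⟨h1, h2, h3, h4⟩ := hmemP p hp
      obtain ⟨h1', h2', h3', h4'⟩ := hmemP p' hp'
      simp only [Prod.mk.injEq] at hpp
      obtain ⟨e1, e2⟩ := hpp
      have hw : wrd p.2 = wrd p'.2 := by rw [← h3, ← h3', e1]
      have hl : (wrd p.2).length = (wrd p'.2).length := by rw [hw]
      rw [hwlen p.2 h2, hwlen p'.2 h2'] at hl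
      have hb1 := pa2 p.2 h2
      have hb2 := pa2 p'.2 h2'
      exact Prod.ext e1 (by omega)
    · intro p hp
      obtain ⟨h1, h2, h3, h4⟩ := hmemP p hp
      have hb1 := pa2 p.1 h1
      have hb2 := pa2 p.2 h2
      have hL1 := paL p.1 h1
      have hL2 := paL p.2 h2
      refine ⟨by simp; omega, by simp; omega, ?_⟩
      have hsp := split3 W p.1 (E p.1) p.2 (E p.2) (by omega) (by omega) (by omega)
      simp only
      rw [hsp]
      have hMid : (W.drop (E p.1)).take (p.2 - E p.1) ≠ [] := by
        apply List.ne_nil_of_length_pos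
        rw [List.length_take, List.length_drop]
        omega
      have heq3 : List.take (E p.2 - p.2) (List.drop p.2 W)
          = List.take (E p.1 - p.1) (List.drop p.1 W) := h3.symm
      rw [heq3]
      exact isInstance_glue (pa4 p.1 h1) hMid
  -- Cauchy-Schwarz
  have hCS : m ^ 2 ≤ KS.card * ∑ u ∈ KS, (t u) ^ 2 := by
    have hz : ((m : ℤ)) ^ 2 ≤ (KS.card : ℤ) * ∑ u ∈ KS, ((t u : ℤ)) ^ 2 := by
      rw [← hsum]
      push_cast
      exact sq_sum_le_card_mul_sum_sq
    exact_mod_cast hz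
  -- assemble
  have hsq : ∑ u ∈ KS, (t u) ^ 2 ≤ 2 * P.card + (2 * f * m + m) := by
    rw [← hSA2, hsplitSA, hsplitS]
    have := hLnk; have := hUnl; have := hDiag
    omega
  calc T ^ 2 ≤ (s * m) ^ 2 := Nat.pow_le_pow_left hTm 2
    _ = s ^ 2 * m ^ 2 := by ring
    _ ≤ s ^ 2 * (KS.card * ∑ u ∈ KS, (t u) ^ 2) := Nat.mul_le_mul_left _ hCS
    _ ≤ s ^ 2 * (q ^ (f + 1) * ∑ u ∈ KS, (t u) ^ 2) := by
        apply Nat.mul_le_mul_left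
        exact Nat.mul_le_mul_right _ hKcard
    _ ≤ s ^ 2 * (q ^ (f + 1) * (2 * P.card + (2 * f * m + m))) := by
        apply Nat.mul_le_mul_left
        exact Nat.mul_le_mul_left _ hsq
    _ ≤ s ^ 2 * (q ^ (f + 1) * (2 * instSubCount (Zimin (n + 1)) W + (2 * f + 1) * T)) := by
        apply Nat.mul_le_mul_left
        apply Nat.mul_le_mul_left
        have h1 : 2 * P.card ≤ 2 * instSubCount (Zimin (n + 1)) W := Nat.mul_le_mul_left _ hP
        have h2 : 2 * f * m + m ≤ (2 * f + 1) * T := by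
          have : (2 * f + 1) * m ≤ (2 * f + 1) * T := Nat.mul_le_mul_left _ hmT
          nlinarith
        omega
    _ = s ^ 2 * q ^ (f + 1) * (2 * instSubCount (Zimin (n + 1)) W + (2 * f + 1) * T) := by
        ring
set_option maxHeartbeats 2000000 in
lemma density_lb (n q : ℕ) (hn : 1 ≤ n) (hq : 2 ≤ q) (W : List (Fin q))
    (hLf : fZ n q ≤ W.length) (hL1 : 1 ≤ W.length) :
    1 / (((fZ n q : ℝ) - 2 ^ n + 2) ^ 2 * (q : ℝ) ^ (fZ n q + 1))
      - (4 * (fZ n q : ℝ) + 1) / (W.length : ℝ)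
      ≤ instDensity (Zimin (n + 1)) W := by
  have h2n : 2 ≤ 2 ^ n := by
    calc 2 = 2 ^ 1 := (pow_one 2).symm
      _ ≤ 2 ^ n := Nat.pow_le_pow_right (by omega) hn
  have hf2n : 2 ^ n - 1 ≤ fZ n q := fZ_lb n q (by omega)
  set f := fZ n q with hf
  set L := W.length with hLd
  set C := instSubCount (Zimin (n + 1)) W with hC
  have hkey := key_count n q hn hq W hLf
  -- real versions
  set RL : ℝ := (L : ℝ) with hRL
  set RF : ℝ := (f : ℝ) with hRF
  set RT : ℝ := RL - RF + 1 with hRT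
  set D : ℝ := (RF - 2 ^ n + 2) ^ 2 * (q : ℝ) ^ (f + 1) with hD
  set RC : ℝ := (C : ℝ) with hRC
  have hscast : ((f + 2 - 2 ^ n : ℕ) : ℝ) = RF - 2 ^ n + 2 := by
    rw [hRF]
    have : (((2:ℕ)) ^ n : ℝ) = (2:ℝ) ^ n := by push_cast; ring
    rw [Nat.cast_sub (by omega)]
    push_cast
    ring
  have hTcast : ((L - f + 1 : ℕ) : ℝ) = RT := by
    rw [hRT, hRL, hRF, Nat.cast_add, Nat.cast_sub hLf]
    norm_num
  have h1 : RT ^ 2 ≤ D * (2 * RC + (2 * RF + 1) * RT) := by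
    have := hkey
    have hcast : (((L - f + 1) ^ 2 : ℕ) : ℝ) ≤
        (((f + 2 - 2 ^ n) ^ 2 * q ^ (f + 1) *
          (2 * C + (2 * f + 1) * (L - f + 1)) : ℕ) : ℝ) := by
      exact_mod_cast this
    push_cast [hTcast, hscast] at hcast
    rw [hD]
    calc RT ^ 2 ≤ _ := hcast
      _ = (RF - 2 ^ n + 2) ^ 2 * (q : ℝ) ^ (f + 1) * (2 * RC + (2 * RF + 1) * RT) := by
          push_cast
          ring
      _ = _ := by ring
  have hD1 : 1 ≤ D := by
    rw [hD]
    have hs1 : (1 : ℝ) ≤ (RF - 2 ^ n + 2) := by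
      rw [hRF]
      have : ((2 ^ n - 1 : ℕ) : ℝ) ≤ (f : ℝ) := by exact_mod_cast hf2n
      rw [Nat.cast_sub (by omega)] at this
      push_cast at this
      nlinarith
    have hq1 : (1 : ℝ) ≤ (q : ℝ) ^ (f + 1) := by
      apply one_le_pow₀
      exact_mod_cast (by omega : 1 ≤ q)
    nlinarith
  have hDpos : 0 < D := by linarith
  have hRLpos : (0 : ℝ) < RL := by
    rw [hRL]; exact_mod_cast hL1
  have hRFnn : (0 : ℝ) ≤ RF := by rw [hRF]; positivity
  have hRTle : RT ≤ RL + 1 := by rw [hRT]; linarith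
  have hRT1 : 1 ≤ RT := by
    rw [hRT, hRL, hRF]
    have : (f : ℝ) ≤ (L : ℝ) := by exact_mod_cast hLf
    linarith
  -- choose form
  have hch : (((L + 1).choose 2 : ℕ) : ℝ) = (RL + 1) * RL / 2 := by
    rw [Nat.cast_choose_two]
    push_cast
    ring
  rw [instDensity, ← hC, ← hRC, ← hLd, hch]
  have hchpos : (0 : ℝ) < (RL + 1) * RL / 2 := by positivity
  rw [le_div_iff₀ hchpos]
  -- final polynomial inequality
  have h2C : RT ^ 2 / D - (2 * RF + 1) * RT ≤ 2 * RC := by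
    have hh : RT ^ 2 / D ≤ 2 * RC + (2 * RF + 1) * RT := by
      rw [div_le_iff₀ hDpos]
      nlinarith [h1]
    linarith
  have hu : 1 / D ≤ 1 := by
    rw [div_le_one hDpos]; linarith
  have hupos : 0 < 1 / D := by positivity
  set u : ℝ := 1 / D with hud
  have h2C' : u * RT ^ 2 - (2 * RF + 1) * RT ≤ 2 * RC := by
    have hx : RT ^ 2 / D = u * RT ^ 2 := by rw [hud]; ring
    rw [← hx]; exact h2C
  have hineq : u * (RL * (RL + 1) - RT ^ 2) ≤ (4 * RF + 1) * (RL + 1) - (2 * RF + 1) * RT := by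
    have hXv : RL * (RL + 1) - RT ^ 2 = 2 * RF * (RL + 1) - (RL + 1) - RF ^ 2 := by
      rw [hRT]; ring
    have hRHSge : (RL * (RL + 1) - RT ^ 2) + (RL + 1) + RF ^ 2
        ≤ (4 * RF + 1) * (RL + 1) - (2 * RF + 1) * RT := by
      rw [hXv, hRT]
      nlinarith [mul_nonneg hRFnn hRFnn]
    have hRFRL : 0 ≤ 2 * RF * (RL + 1) := by positivity
    rcases le_or_gt 0 (RL * (RL + 1) - RT ^ 2) with hX | hX
    · have h5 : u * (RL * (RL + 1) - RT ^ 2) ≤ 1 * (RL * (RL + 1) - RT ^ 2) :=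
        mul_le_mul_of_nonneg_right hu hX
      have h6 : (0:ℝ) ≤ RF ^ 2 := sq_nonneg RF
      linarith
    · have h5 : u * (RL * (RL + 1) - RT ^ 2) ≤ 0 :=
        mul_nonpos_of_nonneg_of_nonpos hupos.le hX.le
      have h6 : (0:ℝ) ≤ RF ^ 2 := sq_nonneg RF
      linarith
  have hfinal : u * (RL * (RL + 1)) - (4 * RF + 1) * (RL + 1) ≤ 2 * RC := by
    have hsplit : u * (RL * (RL + 1)) = u * RT ^ 2 + u * (RL * (RL + 1) - RT ^ 2) := by ring
    linarith
  have hgoal_eq : (u - (4 * RF + 1) / RL) * ((RL + 1) * RL / 2)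
      = (u * (RL * (RL + 1)) - (4 * RF + 1) * (RL + 1)) / 2 := by
    field_simp
  rw [hgoal_eq]
  linarith

lemma instDensity_le_four {Γ β : Type*} (V : List Γ) (W : List β) (h1 : 1 ≤ W.length) :
    instDensity V W ≤ 4 := by
  have hC := instSubCount_le V W
  set L := W.length with hL
  have hch : (((L + 1).choose 2 : ℕ) : ℝ) = ((L : ℝ) + 1) * (L : ℝ) / 2 := by
    rw [Nat.cast_choose_two]
    push_cast
    ring
  have hLpos : (1 : ℝ) ≤ (L : ℝ) := by exact_mod_cast h1
  rw [instDensity, ← hL, hch]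
  rw [div_le_iff₀ (by nlinarith)]
  have hCr : ((instSubCount V W : ℕ) : ℝ) ≤ ((L : ℝ) + 1) ^ 2 := by
    have : (((L + 1) ^ 2 : ℕ) : ℝ) = ((L : ℝ) + 1) ^ 2 := by push_cast; ring
    rw [← this]
    exact_mod_cast hC
  nlinarith

theorem stmt9 (n q : ℕ) (hn : 1 ≤ n) (hq : 2 ≤ q) :
    1 / (((fZ n q : ℝ) - 2 ^ n + 2) ^ 2 * (q : ℝ) ^ (fZ n q + 1)) ≤
      liminfDensity (Zimin (n + 1)) q := by
  set f := fZ n q with hf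
  set c : ℝ := 1 / (((f : ℝ) - 2 ^ n + 2) ^ 2 * (q : ℝ) ^ (f + 1)) with hc
  haveI hne : (Filter.comap (List.length : List (Fin q) → ℕ) Filter.atTop).NeBot := by
    apply Filter.comap_neBot
    intro t ht
    rw [Filter.mem_atTop_sets] at ht
    obtain ⟨N, hN⟩ := ht
    exact ⟨List.replicate N ⟨0, by omega⟩, by simpa using hN N le_rfl⟩
  rw [liminfDensity]
  have hcb : Filter.IsCoboundedUnder (· ≥ ·)
      (Filter.comap (List.length : List (Fin q) → ℕ) Filter.atTop)
      (fun W => instDensity (Zimin (n + 1)) W) := by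
    have hmem : {W : List (Fin q) | 1 ≤ W.length} ∈
        Filter.comap (List.length : List (Fin q) → ℕ) Filter.atTop :=
      Filter.preimage_mem_comap (Filter.mem_atTop 1)
    have hev : ∀ᶠ W in Filter.comap (List.length : List (Fin q) → ℕ) Filter.atTop,
        instDensity (Zimin (n + 1)) W ≤ (4 : ℝ) :=
      Filter.eventually_of_mem hmem (fun W hW => instDensity_le_four _ W hW)
    exact Filter.isCoboundedUnder_ge_of_eventually_le _ hev
  suffices hsuf : ∀ ε : ℝ, 0 < ε → c - ε ≤ Filter.liminf
      (fun W : List (Fin q) => instDensity (Zimin (n + 1)) W)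
      (Filter.comap List.length Filter.atTop) by
    by_contra hlt
    push_neg at hlt
    have h2 := hsuf ((c - Filter.liminf
      (fun W : List (Fin q) => instDensity (Zimin (n + 1)) W)
      (Filter.comap List.length Filter.atTop)) / 2) (by linarith)
    linarith
  intro ε hε
  obtain ⟨N₀, hN₀⟩ := exists_nat_gt ((4 * (f : ℝ) + 1) / ε)
  have hfr : (0 : ℝ) < 4 * (f : ℝ) + 1 := by positivity
  have hN₀pos : (0 : ℝ) < (N₀ : ℝ) := lt_trans (by positivity) hN₀
  apply Filter.le_liminf_of_le hcb
  have hmem : {W : List (Fin q) | max (max f 1) N₀ ≤ W.length} ∈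
      Filter.comap (List.length : List (Fin q) → ℕ) Filter.atTop :=
    Filter.preimage_mem_comap (Filter.mem_atTop _)
  apply Filter.eventually_of_mem hmem
  intro W hW
  rw [Set.mem_setOf_eq] at hW
  have hWf : f ≤ W.length := le_trans (le_max_of_le_left (le_max_left _ _)) hW
  have hW1 : 1 ≤ W.length := le_trans (le_max_of_le_left (le_max_right _ _)) hW
  have hWN : N₀ ≤ W.length := le_trans (le_max_right _ _) hW
  have hd := density_lb n q hn hq W hWf hW1
  have hLpos : (0 : ℝ) < (W.length : ℝ) := by
    have : (1 : ℝ) ≤ (W.length : ℝ) := by exact_mod_cast hW1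
    linarith
  have hstep : (4 * (f : ℝ) + 1) / (W.length : ℝ) ≤ ε := by
    rw [div_le_iff₀ hLpos]
    rw [div_lt_iff₀ hε] at hN₀
    have hcast : (N₀ : ℝ) ≤ (W.length : ℝ) := by exact_mod_cast hWN
    nlinarith
  rw [hc]
  linarith
end

section
/- Fix an integer q ≥ 2 and let V be a nonempty word on any alphabet. Then V is doubled if and only if the expected instance densities δ_n(V,q) converge to 0 as n → ∞. -/
open Filter

section AuxStmt10
set_option linter.unusedSectionVars false
open Finset
variable {Γ β : Type*} [DecidableEq Γ]

lemma ofFn_drop_take {q n : ℕ} (W : Fin n → Fin q) {i ℓ : ℕ} (h : i + ℓ ≤ n) :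
    ((List.ofFn W).drop i).take ℓ = List.ofFn (fun t : Fin ℓ => W ⟨i + t.1, by have := t.2; omega⟩) := by
  apply List.ext_getElem
  · simp; omega
  · intro t h1 h2
    simp only [List.getElem_take, List.getElem_drop, List.getElem_ofFn]

open Classical in
lemma instSubCount_eq (V : List Γ) (W : List β) :
    instSubCount V W = ((Finset.range (W.length+1) ×ˢ Finset.range (W.length+1)).filter
      (fun p => p.1 < p.2 ∧ IsInstance V ((W.drop p.1).take (p.2 - p.1)))).card := by
  have hset : {p : ℕ × ℕ | p.1 < p.2 ∧ p.2 ≤ W.length ∧ IsInstance V ((W.drop p.1).take (p.2 - p.1))}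
      = ↑((Finset.range (W.length+1) ×ˢ Finset.range (W.length+1)).filter
      (fun p => p.1 < p.2 ∧ IsInstance V ((W.drop p.1).take (p.2 - p.1)))) := by
    ext p
    simp only [Set.mem_setOf_eq, coe_filter, mem_product, mem_range, Set.mem_setOf_eq]
    constructor
    · rintro ⟨h1,h2,h3⟩; exact ⟨⟨by omega, by omega⟩, h1, h3⟩
    · rintro ⟨⟨_,h2⟩,h1,h3⟩; exact ⟨h1, by omega, h3⟩
  calc instSubCount V W = Set.ncard {p : ℕ × ℕ | p.1 < p.2 ∧ p.2 ≤ W.length ∧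
        IsInstance V ((W.drop p.1).take (p.2 - p.1))} := rfl
  _ = _ := by rw [hset, Set.ncard_coe_finset]

lemma flatten_map_eq_of {L : List Γ} {φ φ' : Γ → List β}
    (hlen : ∀ x ∈ L, (φ x).length = (φ' x).length)
    (hfl : (L.map φ).flatten = (L.map φ').flatten) : ∀ x ∈ L, φ x = φ' x := by
  induction L with
  | nil => simp
  | cons a L ih =>
    simp only [List.map_cons, List.flatten_cons] at hfl
    obtain ⟨h1, h2⟩ := List.append_inj hfl (hlen a (by simp))
    intro y hy
    rcases List.mem_cons.1 hy with rfl | hy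
    · exact h1
    · exact ih (fun z hz => hlen z (List.mem_cons_of_mem _ hz)) h2 y hy

lemma card_pairs (N : ℕ) :
    ((Finset.range N ×ˢ Finset.range N).filter fun p : ℕ×ℕ => p.1 < p.2).card = N.choose 2 := by
  have h : ((Finset.range N ×ˢ Finset.range N).filter fun p : ℕ×ℕ => p.1 < p.2)
      = (Finset.range N).biUnion (fun j => (Finset.range j).image (fun i => (i, j))) := by
    ext p
    simp only [mem_filter, mem_product, mem_range, mem_biUnion, mem_image]
    constructor
    · rintro ⟨⟨h1, h2⟩, h3⟩; exact ⟨p.2, h2, p.1, h3, rfl⟩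
    · rintro ⟨j, hj, i, hi, rfl⟩; exact ⟨⟨by omega, hj⟩, hi⟩
  rw [h, card_biUnion]
  · have : ∀ j ∈ Finset.range N, ((Finset.range j).image (fun i => (i, j))).card = j := by
      intro j _
      rw [Finset.card_image_of_injective _ (fun a b hab => (Prod.ext_iff.1 hab).1)]
      exact card_range j
    rw [Finset.sum_congr rfl this]
    have := Finset.sum_range_id_mul_two N
    have h2 : N.choose 2 = N * (N-1) / 2 := Nat.choose_two_right N
    omega
  · intro a _ b _ hab
    simp only [Finset.disjoint_left, mem_image]
    rintro p ⟨i, hi, rfl⟩ ⟨i', hi', h⟩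
    exact hab ((Prod.ext_iff.1 h).2).symm

open Classical in
lemma sum_instSubCount (V : List Γ) (q n : ℕ) :
    ∑ W : Fin n → Fin q, instSubCount V (List.ofFn W)
      = ∑ p ∈ Finset.range (n+1) ×ˢ Finset.range (n+1),
        (Finset.univ.filter (fun W : Fin n → Fin q =>
          p.1 < p.2 ∧ IsInstance V (((List.ofFn W).drop p.1).take (p.2 - p.1)))).card := by
  have h1 : ∀ W : Fin n → Fin q, instSubCount V (List.ofFn W)
      = ∑ p ∈ Finset.range (n+1) ×ˢ Finset.range (n+1),
          if p.1 < p.2 ∧ IsInstance V (((List.ofFn W).drop p.1).take (p.2 - p.1)) then 1 else 0 := by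
    intro W
    rw [instSubCount_eq, Finset.card_filter]
    simp [List.length_ofFn]
  simp_rw [h1]
  rw [Finset.sum_comm]
  refine Finset.sum_congr rfl (fun p _ => ?_)
  rw [Finset.card_filter]

open Classical in
lemma cnt_upper (V : List Γ) {q n i j : ℕ} (hij : i < j) (hj : j ≤ n) :
    (Finset.univ.filter (fun W : Fin n → Fin q =>
       IsInstance V (((List.ofFn W).drop i).take (j - i)))).card
      ≤ Nat.card {U : Fin (j-i) → Fin q // IsInstance V (List.ofFn U)} * q ^ (n - (j-i)) := by
  set ℓ := j - i with hℓdef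
  have hin : i + ℓ ≤ n := by omega
  set P : (Fin n → Fin q) → Prop := fun W => IsInstance V (((List.ofFn W).drop i).take ℓ) with hP
  let H : {W : Fin n → Fin q // P W} →
      {U : Fin ℓ → Fin q // IsInstance V (List.ofFn U)} × (Fin (n-ℓ) → Fin q) :=
    fun W => ⟨⟨fun t => W.1 ⟨i + t.1, by have := t.2; omega⟩,
        by rw [← ofFn_drop_take W.1 hin]; exact W.2⟩,
      fun t => W.1 ⟨if t.1 < i then t.1 else t.1 + ℓ, by have := t.2; split <;> omega⟩⟩
  have hinj : Function.Injective H := by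
    rintro ⟨W, hW⟩ ⟨W', hW'⟩ h
    have h1 := congrArg (fun z => z.1.1) h
    have h2 := congrArg Prod.snd h
    simp only [H] at h1 h2
    refine Subtype.ext (funext fun s => ?_)
    by_cases hs : s.1 < i
    · have h3 := congrFun h2 ⟨s.1, by omega⟩
      have he : (⟨if s.1 < i then s.1 else s.1 + ℓ, by split <;> omega⟩ : Fin n) = s :=
        Fin.ext (by simp [hs])
      rwa [he] at h3
    · by_cases hs2 : s.1 < i + ℓ
      · have h3 := congrFun h1 ⟨s.1 - i, by omega⟩
        have he : (⟨i + (s.1 - i), by omega⟩ : Fin n) = s := Fin.ext (by simp; omega)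
        rwa [he] at h3
      · have h3 := congrFun h2 ⟨s.1 - ℓ, by have := s.2; omega⟩
        have he : (⟨if s.1 - ℓ < i then s.1 - ℓ else s.1 - ℓ + ℓ, by have := s.2; split <;> omega⟩ : Fin n) = s :=
          Fin.ext (by simp only; split <;> omega)
        rwa [he] at h3
  calc (Finset.univ.filter (fun W : Fin n → Fin q => P W)).card
      = Fintype.card {W : Fin n → Fin q // P W} := (Fintype.card_subtype _).symm
    _ ≤ Fintype.card ({U : Fin ℓ → Fin q // IsInstance V (List.ofFn U)} × (Fin (n-ℓ) → Fin q)) :=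
        Fintype.card_le_of_injective H hinj
    _ = Nat.card {U : Fin ℓ → Fin q // IsInstance V (List.ofFn U)} * q ^ (n - ℓ) := by
        rw [Fintype.card_prod, Nat.card_eq_fintype_card]
        congr 1
        rw [Fintype.card_fun, Fintype.card_fin, Fintype.card_fin]

-- helper facts about a witness
lemma witness_facts {V : List Γ} {q ℓ : ℕ} (hD : Doubled V) {U : Fin ℓ → Fin q}
    (φ : Γ → List (Fin q)) (hflat : List.ofFn U = (V.map φ).flatten) :
    (∀ x ∈ V, (φ x).length ≤ ℓ) ∧ 2 * ((V.dedup.map φ).flatten).length ≤ ℓ := by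
  have hlen : ℓ = (V.map (fun x => (φ x).length)).sum := by
    have := congrArg List.length hflat
    simpa [List.length_flatten, Function.comp_def] using this
  constructor
  · intro x hx
    rw [hlen]
    exact List.single_le_sum (fun _ _ => Nat.zero_le _) _ (List.mem_map_of_mem (f := fun x => (φ x).length) hx)
  · have h1 : ((V.dedup.map φ).flatten).length = ∑ x ∈ V.toFinset, (φ x).length := by
      rw [List.length_flatten]
      rw [List.map_map,
        show (List.length ∘ φ) = fun x => (φ x).length from rfl,
        ← List.sum_toFinset _ V.nodup_dedup,
        show V.dedup.toFinset = V.toFinset by ext x; simp]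
    have h2 : (V.map (fun x => (φ x).length)).sum
        = ∑ x ∈ V.toFinset, V.count x * (φ x).length := by
      rw [Finset.sum_list_map_count]; simp
    rw [h1, hlen, h2, Finset.mul_sum]
    refine Finset.sum_le_sum (fun x hx => ?_)
    exact Nat.mul_le_mul_right _ (hD x (List.mem_toFinset.1 hx))

lemma card_doubled_le (V : List Γ) (hD : Doubled V) {q : ℕ} (hq : 2 ≤ q) (ℓ : ℕ) :
    Nat.card {U : Fin ℓ → Fin q // IsInstance V (List.ofFn U)}
      ≤ (ℓ+1) ^ V.dedup.length * q ^ (ℓ / 2) := by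
  classical
  set k := V.dedup.length with hk
  have hq0 : 0 < q := by omega
  let d : Fin q := ⟨0, hq0⟩
  let K : {U : Fin ℓ → Fin q // IsInstance V (List.ofFn U)} →
      (Fin k → Fin (ℓ+1)) × (Fin (ℓ/2) → Fin q) := fun U =>
    ⟨fun x => ⟨min ((Classical.choose U.2) (V.dedup.get x)).length ℓ,
        Nat.lt_succ_of_le (min_le_right _ _)⟩,
      fun t => ((V.dedup.map (Classical.choose U.2)).flatten).getD t.1 d⟩
  have hinj : Function.Injective K := by
    rintro ⟨U, hU⟩ ⟨U', hU'⟩ h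
    set φ := Classical.choose hU with hφ
    set φ' := Classical.choose hU' with hφ'
    obtain ⟨hne, hflat⟩ := Classical.choose_spec hU
    obtain ⟨hne', hflat'⟩ := Classical.choose_spec hU'
    obtain ⟨hle, hhalf⟩ := witness_facts hD φ hflat
    obtain ⟨hle', hhalf'⟩ := witness_facts hD φ' hflat'
    have h1 := congrArg Prod.fst h
    have h2 := congrArg Prod.snd h
    simp only [K] at h1 h2
    -- lengths agree on dedup
    have hlen : ∀ x ∈ V.dedup, (φ x).length = (φ' x).length := by
      intro x hx
      obtain ⟨ix, hix⟩ := List.get_of_mem hx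
      have := congrArg Fin.val (congrFun h1 ix)
      simp only [hix] at this
      have e1 : min (φ x).length ℓ = (φ x).length :=
        min_eq_left (hle x (List.mem_dedup.1 hx))
      have e2 : min (φ' x).length ℓ = (φ' x).length :=
        min_eq_left (hle' x (List.mem_dedup.1 hx))
      rw [e1, e2] at this
      exact this
    -- flattens agree
    have hF : (V.dedup.map φ).flatten = (V.dedup.map φ').flatten := by
      have hFL : ((V.dedup.map φ).flatten).length = ((V.dedup.map φ').flatten).length := by
        rw [List.length_flatten, List.length_flatten, List.map_map, List.map_map]
        exact congrArg List.sum (List.map_congr_left (fun x hx => hlen x hx))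
      apply List.ext_getElem hFL
      intro t ht1 ht2
      have htl : t < ℓ/2 := lt_of_lt_of_le ht1 (by omega)
      have := congrFun h2 ⟨t, htl⟩
      simp only at this
      rwa [List.getD_eq_getElem _ _ ht1, List.getD_eq_getElem _ _ ht2] at this
    have hφeq : ∀ x ∈ V, φ x = φ' x := by
      intro x hx
      exact flatten_map_eq_of hlen hF x (List.mem_dedup.2 hx)
    have : List.ofFn U = List.ofFn U' := by
      rw [hflat, hflat', List.map_congr_left hφeq]
    exact Subtype.ext (List.ofFn_inj.1 this)
  calc Nat.card {U : Fin ℓ → Fin q // IsInstance V (List.ofFn U)}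
      ≤ Nat.card ((Fin k → Fin (ℓ+1)) × (Fin (ℓ/2) → Fin q)) :=
        Nat.card_le_card_of_injective K hinj
    _ = (ℓ+1) ^ k * q ^ (ℓ / 2) := by
        rw [Nat.card_eq_fintype_card, Fintype.card_prod, Fintype.card_fun, Fintype.card_fun]
        simp

lemma flatten_replicate_single {β : Type*} {d : β} (t : ℕ) :
    (List.replicate t [d]).flatten = List.replicate t d := by
  induction t with
  | zero => simp
  | succ t ih => simp [List.replicate_succ, ih]

open Classical in
lemma cnt_lower (V : List Γ) {x : Γ} {P S : List Γ} (hVd : V = P ++ x :: S)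
    (hP : x ∉ P) (hS : x ∉ S) {q n i j : ℕ} (hq : 2 ≤ q)
    (hij : i + V.length ≤ j) (hj : j ≤ n) :
    q ^ (n - (V.length - 1)) ≤ (Finset.univ.filter (fun W : Fin n → Fin q =>
       IsInstance V (((List.ofFn W).drop i).take (j - i)))).card := by
  have hq0 : 0 < q := by omega
  set d : Fin q := ⟨0, hq0⟩ with hd
  set t1 := P.length with ht1
  set t2 := S.length with ht2
  set m := V.length with hm
  have hmval : m = t1 + 1 + t2 := by
    rw [hm, hVd]; simp [ht1, ht2]; omega
  set ℓ := j - i with hℓ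
  have hℓm : m ≤ ℓ := by omega
  have hiℓ : i + ℓ ≤ n := by omega
  set D := n - (m - 1) with hD
  have hD0 : 0 < D := by omega
  set cond : ℕ → Prop := fun s => (i ≤ s ∧ s < i + t1) ∨ (j - t2 ≤ s ∧ s < j) with hcond
  set idx : ℕ → ℕ := fun s => if s < i + t1 then s else if s < j then s - t1 else s - (m-1)
    with hidx
  set w : (Fin D → Fin q) → (Fin n → Fin q) := fun f s =>
    if cond s.1 then d else f ⟨idx s.1 % D, Nat.mod_lt _ hD0⟩ with hw
  have hinj : Function.Injective w := by
    intro f f' h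
    funext t
    have ht := t.2
    set e : ℕ := if t.1 < i then t.1 else if t.1 + t1 < j - t2 then t.1 + t1 else t.1 + (m-1)
      with he
    have hen : e < n := by simp only [he]; split_ifs <;> omega
    have hnc : ¬ cond e := by simp only [hcond, he]; split_ifs <;> omega
    have hie : idx e = t.1 := by simp only [hidx, he]; split_ifs <;> omega
    have h3 := congrFun h ⟨e, hen⟩
    rw [hw] at h3
    simp only [if_neg hnc] at h3
    have hfin : (⟨idx e % D, Nat.mod_lt _ hD0⟩ : Fin D) = t :=
      Fin.ext (by rw [hie]; exact Nat.mod_eq_of_lt ht)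
    rwa [hfin] at h3
  have hprop : ∀ f, IsInstance V (((List.ofFn (w f)).drop i).take ℓ) := by
    intro f
    rw [ofFn_drop_take (w f) hiℓ]
    set seg : List (Fin q) := List.ofFn (fun t : Fin ℓ => (w f) ⟨i + t.1, by have := t.2; omega⟩)
      with hseg
    have hseglen : seg.length = ℓ := by simp [hseg]
    have hsegget : ∀ (u : ℕ) (hu : u < ℓ), seg[u]'(by omega) = (w f) ⟨i+u, by omega⟩ := by
      intro u hu; simp [hseg]
    set A : List (Fin q) := (seg.drop t1).take (ℓ - (m-1)) with hA
    have hAlen : A.length = ℓ - (m-1) := by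
      simp [hA, hseglen]; omega
    have hAne : A ≠ [] := by
      have : 0 < A.length := by omega
      exact List.ne_nil_of_length_pos this
    set φ : Γ → List (Fin q) := fun y => if y = x then A else [d] with hφ
    have hmapP : P.map φ = List.replicate t1 [d] := by
      rw [List.eq_replicate_iff]
      refine ⟨by simp [ht1], fun b hb => ?_⟩
      obtain ⟨y, hy, rfl⟩ := List.mem_map.1 hb
      simp only [hφ]
      rw [if_neg (by rintro rfl; exact hP hy)]
    have hmapS : S.map φ = List.replicate t2 [d] := by
      rw [List.eq_replicate_iff]
      refine ⟨by simp [ht2], fun b hb => ?_⟩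
      obtain ⟨y, hy, rfl⟩ := List.mem_map.1 hb
      simp only [hφ]
      rw [if_neg (by rintro rfl; exact hS hy)]
    have h1 : seg.take t1 = List.replicate t1 d := by
      apply List.ext_getElem
      · simp [hseglen]; omega
      · intro u hu1 hu2
        rw [List.getElem_take, List.getElem_replicate]
        have hu : u < ℓ := by simp [hseglen] at hu1; omega
        have hut1 : u < t1 := by simp at hu2; omega
        rw [hsegget u hu]
        have hc : cond (i+u) := by simp only [hcond]; left; omega
        simp only [hw, hc, if_true]
    have h2 : seg.drop (ℓ - t2) = List.replicate t2 d := by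
      apply List.ext_getElem
      · simp [hseglen]; omega
      · intro u hu1 hu2
        rw [List.getElem_drop, List.getElem_replicate]
        have hu : (ℓ - t2) + u < ℓ := by simp [hseglen] at hu1; omega
        rw [hsegget _ hu]
        have hc : cond (i+((ℓ-t2)+u)) := by simp only [hcond]; right; omega
        simp only [hw, hc, if_true]
    refine ⟨φ, fun y _ => ?_, ?_⟩
    · simp only [hφ]
      split
      · exact hAne
      · simp
    · have hφx : φ x = A := by simp [hφ]
      rw [hVd, List.map_append, List.map_cons, List.flatten_append, List.flatten_cons,
        hmapP, hmapS, flatten_replicate_single, flatten_replicate_single, hφx]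
      calc seg = seg.take t1 ++ seg.drop t1 := (List.take_append_drop _ _).symm
        _ = seg.take t1 ++ ((seg.drop t1).take (ℓ-(m-1)) ++ (seg.drop t1).drop (ℓ-(m-1))) := by
            rw [List.take_append_drop, List.take_append_drop, List.take_append_drop]
        _ = List.replicate t1 d ++ (A ++ List.replicate t2 d) := by
            rw [h1, ← hA, List.drop_drop, show t1+(ℓ-(m-1)) = ℓ - t2 by omega, h2]
  calc q ^ (n - (m-1))
      = (Finset.univ : Finset (Fin D → Fin q)).card := by
        simp [hD]
    _ ≤ (Finset.univ.filter (fun W : Fin n → Fin q =>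
         IsInstance V (((List.ofFn W).drop i).take ℓ))).card := by
        apply Finset.card_le_card_of_injOn w
          (fun f _ => Finset.mem_filter.2 ⟨Finset.mem_univ _, hprop f⟩)
        exact hinj.injOn

lemma card_good (n m : ℕ) (hm : m ≤ n) :
    (n+1-m).choose 2 ≤ ((Finset.range (n+1) ×ˢ Finset.range (n+1)).filter
      (fun p : ℕ×ℕ => p.1 + m ≤ p.2)).card := by
  classical
  rw [← card_pairs (n+1-m)]
  apply Finset.card_le_card_of_injOn (fun p => (p.1, p.2 + m))
  · intro p hp
    simp only [Finset.mem_coe, mem_filter, mem_product, mem_range] at *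
    omega
  · intro p _ p' _ h
    have h1 := congrArg Prod.fst h
    have h2 := congrArg Prod.snd h
    simp only at h1 h2
    exact Prod.ext h1 (by omega)

open Classical in
lemma expDensity_eq (V : List Γ) (q n : ℕ) :
    expDensity V q n = (∑ p ∈ Finset.range (n+1) ×ˢ Finset.range (n+1),
        ((Finset.univ.filter (fun W : Fin n → Fin q =>
          p.1 < p.2 ∧ IsInstance V (((List.ofFn W).drop p.1).take (p.2 - p.1)))).card : ℝ))
      / ((q:ℝ)^n * ((n+1).choose 2 : ℝ)) := by
  have h1 : ∀ W : Fin n → Fin q, instDensity V (List.ofFn W)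
      = (instSubCount V (List.ofFn W) : ℝ) / (((n+1).choose 2 : ℕ) : ℝ) := by
    intro W; rw [instDensity, List.length_ofFn]
  rw [expDensity]
  simp_rw [h1]
  rw [← Finset.sum_div, ← Nat.cast_sum, sum_instSubCount, Nat.cast_sum, div_div, mul_comm]

lemma expDensity_nonneg {Γ : Type*} (V : List Γ) (q n : ℕ) : 0 ≤ expDensity V q n := by
  rw [expDensity]
  apply div_nonneg _ (by positivity)
  refine Finset.sum_nonneg (fun W _ => ?_)
  rw [instDensity]
  positivity

lemma forward_dir (V : List Γ) (hD : Doubled V) {q : ℕ} (hq : 2 ≤ q) :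
    Filter.Tendsto (fun n => expDensity V q n) Filter.atTop (nhds 0) := by
  classical
  set k := V.dedup.length with hk
  set s : ℝ := Real.sqrt q with hs
  have hq1 : (1:ℝ) < q := by exact_mod_cast (by omega : 1 < q)
  have hs2 : s^2 = q := Real.sq_sqrt (by positivity)
  have hs1 : 1 < s := by nlinarith [Real.sqrt_nonneg (q:ℝ)]
  have hs0 : 0 < s := by linarith
  set r : ℝ := s⁻¹ with hr
  have hr0 : 0 < r := by positivity
  have hr1 : r < 1 := by rw [hr, inv_lt_one_iff₀]; right; exact hs1
  set g : ℕ → ℝ := fun ℓ => ((ℓ:ℝ)+1)^k * r^ℓ with hg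
  have hg0 : ∀ ℓ, 0 ≤ g ℓ := by intro ℓ; rw [hg]; positivity
  have hsum : Summable g := by
    have h1 : Summable (fun ℓ : ℕ => (ℓ:ℝ)^k * r^ℓ) :=
      summable_pow_mul_geometric_of_norm_lt_one k
        (by rw [Real.norm_eq_abs, abs_of_nonneg hr0.le]; exact hr1)
    have h2 := (summable_nat_add_iff 1).2 h1
    have h3 := h2.mul_left r⁻¹
    refine h3.congr (fun ℓ => ?_)
    simp only [hg]
    push_cast
    rw [pow_succ]
    have : r ≠ 0 := ne_of_gt hr0
    field_simp
  set C := ∑' ℓ, g ℓ with hC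
  have hC0 : 0 ≤ C := tsum_nonneg hg0
  have key : ∀ n : ℕ, 1 ≤ n → expDensity V q n ≤ 2*C/n := by
    intro n hn
    rw [expDensity_eq V q n]
    have hqn : (0:ℝ) < (q:ℝ)^n := by positivity
    have hchval : (((n+1).choose 2 : ℕ) : ℝ) = (n+1)*n/2 := by
      rw [Nat.cast_choose_two (K := ℝ) (n+1)]
      push_cast
      simp
    have hch : (0:ℝ) < (((n+1).choose 2 : ℕ) : ℝ) := by
      rw [hchval]
      have hn1 : (1:ℝ) ≤ (n:ℝ) := by exact_mod_cast hn
      nlinarith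
    have hp : ∀ p ∈ Finset.range (n+1) ×ˢ Finset.range (n+1),
        ((Finset.univ.filter (fun W : Fin n → Fin q =>
          p.1 < p.2 ∧ IsInstance V (((List.ofFn W).drop p.1).take (p.2 - p.1)))).card : ℝ)
        ≤ (q:ℝ)^n * (if p.1 < p.2 then g (p.2 - p.1) else 0) := by
      intro p hpmem
      by_cases hlt : p.1 < p.2
      · rw [if_pos hlt]
        set ℓ := p.2 - p.1 with hℓ
        have hj : p.2 ≤ n := by
          simp only [mem_product, mem_range] at hpmem; omega
        have hℓn : ℓ ≤ n := by omega
        have hfe : (Finset.univ.filter (fun W : Fin n → Fin q =>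
            p.1 < p.2 ∧ IsInstance V (((List.ofFn W).drop p.1).take ℓ)))
            = (Finset.univ.filter (fun W : Fin n → Fin q =>
              IsInstance V (((List.ofFn W).drop p.1).take ℓ))) := by
          apply Finset.filter_congr; intro W _; simp [hlt]
        rw [hfe]
        have e1 : (q:ℝ)^(ℓ/2) ≤ s^ℓ := by
          calc (q:ℝ)^(ℓ/2) = (s^2)^(ℓ/2) := by rw [hs2]
          _ = s^(2*(ℓ/2)) := by rw [← pow_mul]
          _ ≤ s^ℓ := pow_le_pow_right₀ hs1.le (by omega)
        have e3 : (q:ℝ)^ℓ * r^ℓ = s^ℓ := by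
          rw [hr, inv_pow, ← hs2, ← pow_mul, two_mul, pow_add]
          field_simp
        calc ((Finset.univ.filter (fun W : Fin n → Fin q =>
              IsInstance V (((List.ofFn W).drop p.1).take ℓ))).card : ℝ)
            ≤ ((Nat.card {U : Fin ℓ → Fin q // IsInstance V (List.ofFn U)} * q^(n-ℓ) : ℕ) : ℝ) := by
              exact_mod_cast cnt_upper V hlt hj
          _ ≤ ((((ℓ+1)^k * q^(ℓ/2)) * q^(n-ℓ) : ℕ) : ℝ) := by
              exact_mod_cast Nat.mul_le_mul_right _ (card_doubled_le V hD hq ℓ)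
          _ = ((ℓ:ℝ)+1)^k * (q:ℝ)^(ℓ/2) * (q:ℝ)^(n-ℓ) := by push_cast; ring
          _ ≤ ((ℓ:ℝ)+1)^k * s^ℓ * (q:ℝ)^(n-ℓ) := by
              have h4 : ((ℓ:ℝ)+1)^k * (q:ℝ)^(ℓ/2) ≤ ((ℓ:ℝ)+1)^k * s^ℓ :=
                mul_le_mul_of_nonneg_left e1 (by positivity)
              exact mul_le_mul_of_nonneg_right h4 (by positivity)
          _ = (q:ℝ)^n * g ℓ := by
              rw [hg, show (q:ℝ)^n = (q:ℝ)^ℓ * (q:ℝ)^(n-ℓ) by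
                rw [← pow_add]; congr 1; omega, ← e3]
              ring
      · rw [if_neg hlt]
        have : (Finset.univ.filter (fun W : Fin n → Fin q =>
            p.1 < p.2 ∧ IsInstance V (((List.ofFn W).drop p.1).take (p.2 - p.1)))) = ∅ := by
          apply Finset.filter_false_of_mem
          intro W _ hcon
          exact hlt hcon.1
        rw [this]
        simp
    have hinner : ∀ i ∈ Finset.range (n+1),
        ∑ j ∈ Finset.range (n+1), (if i < j then g (j - i) else 0) ≤ C := by
      intro i _
      rw [← Finset.sum_filter]
      rw [show ∑ j ∈ (Finset.range (n+1)).filter (fun j => i < j), g (j - i)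
          = ∑ ℓ ∈ ((Finset.range (n+1)).filter (fun j => i < j)).image (fun j => j - i), g ℓ by
        rw [Finset.sum_image]
        intro a ha b hb hab
        simp only [Finset.mem_coe, mem_filter, mem_range] at ha hb
        simp only at hab
        omega]
      exact hsum.sum_le_tsum _ (fun ℓ _ => hg0 ℓ)
    have hsumb : ∑ p ∈ Finset.range (n+1) ×ˢ Finset.range (n+1),
        ((Finset.univ.filter (fun W : Fin n → Fin q =>
          p.1 < p.2 ∧ IsInstance V (((List.ofFn W).drop p.1).take (p.2 - p.1)))).card : ℝ)
        ≤ (q:ℝ)^n * ((n+1) * C) := by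
      calc ∑ p ∈ Finset.range (n+1) ×ˢ Finset.range (n+1),
          ((Finset.univ.filter (fun W : Fin n → Fin q =>
            p.1 < p.2 ∧ IsInstance V (((List.ofFn W).drop p.1).take (p.2 - p.1)))).card : ℝ)
          ≤ ∑ p ∈ Finset.range (n+1) ×ˢ Finset.range (n+1),
            (q:ℝ)^n * (if p.1 < p.2 then g (p.2 - p.1) else 0) := Finset.sum_le_sum hp
        _ = (q:ℝ)^n * ∑ p ∈ Finset.range (n+1) ×ˢ Finset.range (n+1),
            (if p.1 < p.2 then g (p.2 - p.1) else 0) := by rw [Finset.mul_sum]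
        _ ≤ (q:ℝ)^n * ((n+1) * C) := by
            apply mul_le_mul_of_nonneg_left _ hqn.le
            rw [Finset.sum_product]
            calc ∑ i ∈ Finset.range (n+1), ∑ j ∈ Finset.range (n+1),
                (if i < j then g (j - i) else 0)
                ≤ ∑ i ∈ Finset.range (n+1), C := Finset.sum_le_sum hinner
              _ = (n+1) * C := by rw [Finset.sum_const, Finset.card_range, nsmul_eq_mul]; push_cast; ring
    rw [div_le_div_iff₀ (by positivity) (by exact_mod_cast (by omega : 0 < n))]
    rw [hchval]
    nlinarith [hsumb, hqn, hC0, (by exact_mod_cast hn : (1:ℝ) ≤ n)]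
  apply squeeze_zero' (Filter.Eventually.of_forall (expDensity_nonneg V q))
    (Filter.eventually_atTop.2 ⟨1, key⟩)
  exact tendsto_const_div_atTop_nhds_zero_nat (2*C)

lemma backward_dir (V : List Γ) (hV : V ≠ []) (hND : ¬ Doubled V) {q : ℕ} (hq : 2 ≤ q) :
    ¬ Filter.Tendsto (fun n => expDensity V q n) Filter.atTop (nhds 0) := by
  classical
  obtain ⟨x, hx, hcx⟩ : ∃ x ∈ V, ¬ 2 ≤ V.count x := by
    simpa [Doubled] using hND
  have hc1 : V.count x = 1 := by
    have := List.count_pos_iff.2 hx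
    omega
  obtain ⟨P, S, hVd⟩ := List.mem_iff_append.1 hx
  have hcnt : List.count x P + List.count x S = 0 := by
    have h2 := hc1
    rw [hVd, List.count_append, List.count_cons_self] at h2
    omega
  have hPx : x ∉ P := by
    rw [← List.count_eq_zero]; omega
  have hSx : x ∉ S := by
    rw [← List.count_eq_zero]; omega
  set m := V.length with hm
  have hm1 : 1 ≤ m := by
    rw [hm]
    exact List.length_pos_of_ne_nil hV
  set c : ℝ := 1/(4*(q:ℝ)^(m-1)) with hc
  have hqR : (0:ℝ) < (q:ℝ) := by exact_mod_cast (by omega : 0 < q)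
  have hc0 : 0 < c := by
    rw [hc]
    apply div_pos one_pos
    have := pow_pos hqR (m-1)
    linarith
  have key : ∀ n, 2*m+1 ≤ n → c ≤ expDensity V q n := by
    intro n hn
    rw [expDensity_eq V q n]
    have hQ0 : (0:ℝ) < (q:ℝ)^(m-1) := pow_pos hqR (m-1)
    have hR0 : (0:ℝ) < (q:ℝ)^(n-(m-1)) := pow_pos hqR (n-(m-1))
    have hchval : (((n+1).choose 2 : ℕ) : ℝ) = (n+1)*n/2 := by
      rw [Nat.cast_choose_two (K := ℝ) (n+1)]
      push_cast
      simp
    have hch0 : (0:ℝ) < (((n+1).choose 2 : ℕ) : ℝ) := by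
      rw [hchval]
      have hn1 : (1:ℝ) ≤ (n:ℝ) := by exact_mod_cast (by omega : 1 ≤ n)
      nlinarith
    set G := (Finset.range (n+1) ×ˢ Finset.range (n+1)).filter
      (fun p : ℕ×ℕ => p.1 + m ≤ p.2) with hG
    have hGcnt : ∀ p ∈ G, (q:ℕ)^(n-(m-1)) ≤ ((Finset.univ.filter (fun W : Fin n → Fin q =>
        p.1 < p.2 ∧ IsInstance V (((List.ofFn W).drop p.1).take (p.2 - p.1)))).card) := by
      intro p hpG
      rw [hG] at hpG
      simp only [mem_filter, mem_product, mem_range] at hpG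
      obtain ⟨⟨hp1, hp2⟩, hpm⟩ := hpG
      have hlt : p.1 < p.2 := by omega
      have hfe : (Finset.univ.filter (fun W : Fin n → Fin q =>
          p.1 < p.2 ∧ IsInstance V (((List.ofFn W).drop p.1).take (p.2 - p.1))))
          = (Finset.univ.filter (fun W : Fin n → Fin q =>
            IsInstance V (((List.ofFn W).drop p.1).take (p.2 - p.1)))) := by
        apply Finset.filter_congr; intro W _; simp [hlt]
      rw [hfe, hm]
      exact cnt_lower V hVd hPx hSx hq (by rw [← hm]; omega) (by omega)
    have hnum : ((G.card * q^(n-(m-1)) : ℕ) : ℝ)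
        ≤ ∑ p ∈ Finset.range (n+1) ×ˢ Finset.range (n+1),
          ((Finset.univ.filter (fun W : Fin n → Fin q =>
            p.1 < p.2 ∧ IsInstance V (((List.ofFn W).drop p.1).take (p.2 - p.1)))).card : ℝ) := by
      calc ((G.card * q^(n-(m-1)) : ℕ) : ℝ)
          = ∑ _p ∈ G, ((q^(n-(m-1)) : ℕ) : ℝ) := by
            rw [Finset.sum_const, nsmul_eq_mul]; push_cast; ring
        _ ≤ ∑ p ∈ G, ((Finset.univ.filter (fun W : Fin n → Fin q =>
            p.1 < p.2 ∧ IsInstance V (((List.ofFn W).drop p.1).take (p.2 - p.1)))).card : ℝ) :=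
            Finset.sum_le_sum (fun p hp => by exact_mod_cast hGcnt p hp)
        _ ≤ _ := Finset.sum_le_sum_of_subset_of_nonneg (Finset.filter_subset _ _)
            (fun _ _ _ => by positivity)
    have hGcard : (n+1-m).choose 2 ≤ G.card := card_good n m (by omega)
    have ha2 : 2*((n-m : ℕ):ℝ) ≥ (n:ℝ) + 1 := by
      have : 2*(n-m) ≥ n+1 := by omega
      exact_mod_cast this
    have hch4 : (((n+1).choose 2 : ℕ) : ℝ) ≤ 4 * G.card := by
      rw [hchval]
      have h5 : ((n+1-m).choose 2 : ℝ) ≤ (G.card : ℝ) := by exact_mod_cast hGcard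
      have h6 : ((n+1-m).choose 2 : ℝ) = (((n-m : ℕ):ℝ)+1)*((n-m : ℕ):ℝ)/2 := by
        rw [show n+1-m = (n-m)+1 by omega, Nat.cast_choose_two (K := ℝ)]
        push_cast
        ring
      rw [h6] at h5
      nlinarith [ha2, h5]
    -- final chain
    have hqsplit : (q:ℝ)^n = (q:ℝ)^(m-1) * (q:ℝ)^(n-(m-1)) := by
      rw [← pow_add]; congr 1; omega
    have hden : (0:ℝ) < (q:ℝ)^n * (((n+1).choose 2 : ℕ):ℝ) :=
      mul_pos (pow_pos hqR n) hch0
    have h8 : c ≤ ((G.card * q^(n-(m-1)) : ℕ):ℝ)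
        / ((q:ℝ)^n * (((n+1).choose 2 : ℕ):ℝ)) := by
      rw [hc, div_le_div_iff₀ (by linarith [pow_pos hqR (m-1)] : (0:ℝ) < 4*(q:ℝ)^(m-1)) hden]
      push_cast
      rw [one_mul, hqsplit]
      calc (q:ℝ)^(m-1) * (q:ℝ)^(n-(m-1)) * (((n+1).choose 2 : ℕ):ℝ)
          ≤ (q:ℝ)^(m-1) * (q:ℝ)^(n-(m-1)) * (4*(G.card:ℝ)) := by
            apply mul_le_mul_of_nonneg_left hch4 (by positivity)
        _ = (G.card:ℝ) * (q:ℝ)^(n-(m-1)) * (4 * (q:ℝ)^(m-1)) := by ring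
    exact h8.trans ((div_le_div_iff_of_pos_right hden).2 hnum)
  intro hT
  have h1 := hT.eventually_lt_const hc0
  obtain ⟨n, hn1, hn2⟩ := (h1.and (Filter.eventually_ge_atTop (2*m+1))).exists
  exact absurd (key n hn2) (not_le.2 hn1)

end AuxStmt10

theorem stmt10 {Γ : Type*} [DecidableEq Γ] (V : List Γ) (hV : V ≠ []) (q : ℕ) (hq : 2 ≤ q) :
    Doubled V ↔ Tendsto (fun n => expDensity V q n) atTop (nhds 0) := by
  constructor
  · intro hD
    exact forward_dir V hD hq
  · intro hT
    by_contra hND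
    exact backward_dir V hV hND hq hT
end

section
/- Let V be a nonempty doubled word and let q ≥ 2 be an integer. Then there exist constants c, C > 0 and N such that for all n ≥ N: c/n ≤ δ_n(V,q) ≤ C·(log n)/n. -/
open Filter

namespace Stmt17Aux

/-- number of length-m instances -/
noncomputable def Acount {Γ : Type*} (V : List Γ) (q m : ℕ) : ℕ :=
  Nat.card {u : Fin m → Fin q // IsInstance V (List.ofFn u)}

lemma Acount_eq {Γ : Type*} (V : List Γ) (q m : ℕ)
    [DecidablePred fun u : Fin m → Fin q => IsInstance V (List.ofFn u)] :
    Acount V q m = (Finset.univ.filter fun u : Fin m → Fin q => IsInstance V (List.ofFn u)).card := by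
  rw [Acount, Nat.card_eq_fintype_card, Fintype.card_subtype]

lemma flatten_inj {α : Type*} : ∀ (l₁ l₂ : List (List α)),
    l₁.map List.length = l₂.map List.length → l₁.flatten = l₂.flatten → l₁ = l₂
  | [], [], _, _ => rfl
  | a :: l₁, b :: l₂, hl, hf => by
    simp only [List.map_cons, List.cons.injEq] at hl
    simp only [List.flatten_cons] at hf
    have hab : a = b := List.append_inj_left hf hl.1
    subst hab
    rw [flatten_inj l₁ l₂ hl.2 (List.append_cancel_left hf)]

lemma ofFn_window {q n : ℕ} (W : Fin n → Fin q) (i m : ℕ) (him : i + m ≤ n) :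
    ((List.ofFn W).drop i).take m
      = List.ofFn (fun t : Fin m => W ⟨i + t.1, by omega⟩) := by
  apply List.ext_getElem
  · simp; omega
  · intro t h1 h2
    simp only [List.getElem_take, List.getElem_drop, List.getElem_ofFn]

lemma instSubCount_eq {Γ β : Type*} (V : List Γ) (W : List β)
    [DecidablePred fun p : ℕ × ℕ =>
      p.1 < p.2 ∧ IsInstance V ((W.drop p.1).take (p.2 - p.1))] :
    instSubCount V W = ((Finset.range (W.length + 1) ×ˢ Finset.range (W.length + 1)).filter
      (fun p => p.1 < p.2 ∧ IsInstance V ((W.drop p.1).take (p.2 - p.1)))).card := by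
  classical
  have hset : {p : ℕ × ℕ | p.1 < p.2 ∧ p.2 ≤ W.length
        ∧ IsInstance V ((W.drop p.1).take (p.2 - p.1))}
      = ↑((Finset.range (W.length + 1) ×ˢ Finset.range (W.length + 1)).filter
        (fun p => p.1 < p.2 ∧ IsInstance V ((W.drop p.1).take (p.2 - p.1)))) := by
    ext p
    simp only [Set.mem_setOf_eq, Finset.coe_filter, Finset.mem_product, Finset.mem_range]
    constructor
    · rintro ⟨h1, h2, h3⟩; exact ⟨⟨by omega, by omega⟩, h1, h3⟩
    · rintro ⟨⟨ha, hb⟩, h1, h3⟩; exact ⟨h1, by omega, h3⟩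
  have h1 : instSubCount V W = ({p : ℕ × ℕ | p.1 < p.2 ∧ p.2 ≤ W.length
      ∧ IsInstance V ((W.drop p.1).take (p.2 - p.1))} : Set (ℕ × ℕ)).ncard :=
    Nat.card_coe_set_eq _
  rw [h1, hset, Set.ncard_coe_finset]

def winEquiv (q n m i : ℕ) (h : i + m ≤ n) (P : (Fin m → Fin q) → Prop) :
    {W : Fin n → Fin q // P (fun t => W ⟨i + t.1, by omega⟩)} ≃
      {u : Fin m → Fin q // P u} × ({j : Fin n // ¬(i ≤ j.1 ∧ j.1 < i + m)} → Fin q) where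
  toFun W := (⟨fun t => W.1 ⟨i + t.1, by omega⟩, W.2⟩, fun j => W.1 j.1)
  invFun x := ⟨fun j => if h' : i ≤ j.1 ∧ j.1 < i + m then x.1.1 ⟨j.1 - i, by omega⟩
      else x.2 ⟨j, h'⟩, by
    convert x.1.2 using 1
    funext t
    show (if h' : i ≤ i + t.1 ∧ i + t.1 < i + m then x.1.1 ⟨i + t.1 - i, by omega⟩
      else x.2 ⟨⟨i + t.1, by omega⟩, h'⟩) = x.1.1 t
    split
    · apply congrArg; exact Fin.ext (by simp)
    · next h' => exact absurd ⟨Nat.le_add_right _ _, by omega⟩ h'⟩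
  left_inv W := by
    apply Subtype.ext
    funext j
    dsimp only
    split
    · next h' => apply congrArg; exact Fin.ext (by simp; omega)
    · rfl
  right_inv x := by
    refine Prod.ext ?_ ?_
    · apply Subtype.ext
      funext t
      show (if h' : i ≤ i + t.1 ∧ i + t.1 < i + m then x.1.1 ⟨i + t.1 - i, by omega⟩
        else x.2 ⟨⟨i + t.1, by omega⟩, h'⟩) = x.1.1 t
      split
      · apply congrArg; exact Fin.ext (by simp)
      · next h' => exact absurd ⟨Nat.le_add_right _ _, by omega⟩ h'
    · funext j
      show (if h' : i ≤ j.1.1 ∧ j.1.1 < i + m then x.1.1 ⟨j.1.1 - i, by omega⟩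
        else x.2 ⟨j.1, h'⟩) = x.2 j
      split
      · next h' => exact absurd h' j.2
      · apply congrArg; rfl

lemma card_win (q n m i : ℕ) (h : i + m ≤ n) (P : (Fin m → Fin q) → Prop) [DecidablePred P] :
    (Finset.univ.filter fun W : Fin n → Fin q => P (fun t => W ⟨i + t.1, by omega⟩)).card
      = (Finset.univ.filter P).card * q ^ (n - m) := by
  classical
  rw [← Fintype.card_subtype, ← Fintype.card_subtype]
  rw [Fintype.card_congr (winEquiv q n m i h P), Fintype.card_prod, Fintype.card_fun]
  congr 1
  rw [Fintype.card_fin]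
  congr 1
  have : Fintype.card {j : Fin n // i ≤ j.1 ∧ j.1 < i + m} = m := by
    rw [Fintype.card_congr (show {j : Fin n // i ≤ j.1 ∧ j.1 < i + m} ≃ Fin m from
      { toFun := fun j => ⟨j.1.1 - i, by omega⟩
        invFun := fun t => ⟨⟨i + t.1, by omega⟩, by constructor <;> simp <;> omega⟩
        left_inv := fun j => Subtype.ext (Fin.ext (by obtain ⟨h1, h2⟩ := j.2; simp; omega))
        right_inv := fun t => Fin.ext (by simp) }), Fintype.card_fin]
  rw [Fintype.card_subtype_compl, this, Fintype.card_fin]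

set_option maxHeartbeats 1000000 in
/-- The master sum identity. -/
lemma sumT {Γ : Type*} (V : List Γ) (q n : ℕ) :
    (∑ W : Fin n → Fin q, instSubCount V (List.ofFn W)) =
      ∑ p ∈ (Finset.range (n + 1) ×ˢ Finset.range (n + 1)).filter (fun p => p.1 < p.2),
        Acount V q (p.2 - p.1) * q ^ (n - (p.2 - p.1)) := by
  classical
  have h1 : ∀ W : Fin n → Fin q, instSubCount V (List.ofFn W) =
      ∑ p ∈ Finset.range (n + 1) ×ˢ Finset.range (n + 1),
        if p.1 < p.2 ∧ IsInstance V (((List.ofFn W).drop p.1).take (p.2 - p.1)) then 1 else 0 := by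
    intro W
    rw [instSubCount_eq, Finset.card_filter]
    simp only [List.length_ofFn]
  rw [Finset.sum_congr rfl (fun W _ => h1 W), Finset.sum_comm]
  have h2 : ∀ p ∈ Finset.range (n + 1) ×ˢ Finset.range (n + 1),
      (∑ W : Fin n → Fin q,
        if p.1 < p.2 ∧ IsInstance V (((List.ofFn W).drop p.1).take (p.2 - p.1)) then 1 else 0)
      = if p.1 < p.2 then Acount V q (p.2 - p.1) * q ^ (n - (p.2 - p.1)) else 0 := by
    rintro ⟨i, j⟩ hp
    simp only [Finset.mem_product, Finset.mem_range] at hp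
    by_cases hij : i < j
    · simp only [if_pos hij, hij, true_and]
      have him : i + (j - i) ≤ n := by omega
      have hwin : ∀ W : Fin n → Fin q,
          (((List.ofFn W).drop i).take (j - i))
            = List.ofFn (fun t : Fin (j - i) => W ⟨i + t.1, by omega⟩) :=
        fun W => ofFn_window W i (j - i) him
      calc (∑ W : Fin n → Fin q,
            if IsInstance V (((List.ofFn W).drop i).take (j - i)) then 1 else 0)
          = (Finset.univ.filter fun W : Fin n → Fin q =>
              (fun u : Fin (j - i) → Fin q => IsInstance V (List.ofFn u))
                (fun t => W ⟨i + t.1, by omega⟩)).card := by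
            rw [Finset.card_filter]
            exact Finset.sum_congr rfl (fun W _ => by rw [hwin W])
        _ = (Finset.univ.filter fun u : Fin (j - i) → Fin q =>
              IsInstance V (List.ofFn u)).card * q ^ (n - (j - i)) :=
            card_win q n (j - i) i him (fun u => IsInstance V (List.ofFn u))
        _ = Acount V q (j - i) * q ^ (n - (j - i)) := by rw [Acount_eq]
    · simp [hij]
  rw [Finset.sum_congr rfl h2, ← Finset.sum_filter]

section
variable {Γ : Type*} [DecidableEq Γ] (V : List Γ) (q : ℕ)

/-- length facts for a chosen substitution -/
lemma inst_facts {m : ℕ} (hd : Doubled V) {U : List (Fin q)} (hU : U.length = m)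
    (φ : Γ → List (Fin q)) (hφ : U = (V.map φ).flatten) :
    (∑ x ∈ V.toFinset, V.count x * (φ x).length = m) ∧
    (∀ x ∈ V.toFinset, (φ x).length ≤ m) ∧
    ((V.dedup.map φ).flatten.length = ∑ x ∈ V.toFinset, (φ x).length) ∧
    (∑ x ∈ V.toFinset, (φ x).length ≤ m / 2) := by
  have hm : m = ∑ x ∈ V.toFinset, V.count x * (φ x).length := by
    rw [← hU, hφ, List.length_flatten, List.map_map]
    rw [Finset.sum_list_map_count]
    simp [Function.comp]
  refine ⟨hm.symm, ?_, ?_, ?_⟩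
  · intro x hx
    have h1 : V.count x * (φ x).length ≤ m := by
      rw [hm]
      exact Finset.single_le_sum (f := fun i => List.count i V * (φ i).length) (fun _ _ => Nat.zero_le _) hx
    have h2 : 1 ≤ V.count x := List.count_pos_iff.mpr (List.mem_toFinset.mp hx)
    calc (φ x).length = 1 * (φ x).length := (one_mul _).symm
      _ ≤ V.count x * (φ x).length := Nat.mul_le_mul_right _ h2
      _ ≤ m := h1
  · rw [List.length_flatten, List.map_map]
    rw [← List.sum_toFinset _ V.nodup_dedup]
    have : V.dedup.toFinset = V.toFinset := by ext x; simp
    rw [this]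
    rfl
  · rw [Nat.le_div_iff_mul_le (by norm_num)]
    calc (∑ x ∈ V.toFinset, (φ x).length) * 2 = ∑ x ∈ V.toFinset, 2 * (φ x).length := by
          rw [Finset.sum_mul]; exact Finset.sum_congr rfl (fun x _ => by ring)
      _ ≤ ∑ x ∈ V.toFinset, V.count x * (φ x).length :=
          Finset.sum_le_sum (fun x hx => Nat.mul_le_mul_right _ (hd x (List.mem_toFinset.mp hx)))
      _ = m := hm.symm

end

lemma Am_bound {Γ : Type*} [DecidableEq Γ] (V : List Γ) (hd : Doubled V)
    (q : ℕ) (hq : 2 ≤ q) (m : ℕ) :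
    Acount V q m ≤ (m + 1) ^ V.toFinset.card * q ^ (m / 2) := by
  classical
  rw [Acount_eq]
  have hq0 : 0 < q := by omega
  set F : (Fin m → Fin q) → ((↥V.toFinset → Fin (m + 1)) × (Fin (m / 2) → Fin q)) := fun u =>
    if h : IsInstance V (List.ofFn u) then
      (fun x => ⟨min ((Classical.choose h) x.1).length m, by omega⟩,
       fun t => ((V.dedup.map (Classical.choose h)).flatten).getD t.1 ⟨0, hq0⟩)
    else (fun _ => ⟨0, by omega⟩, fun _ => ⟨0, hq0⟩) with hF
  have hcard : (Finset.univ.filter fun u : Fin m → Fin q => IsInstance V (List.ofFn u)).card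
      ≤ (Finset.univ : Finset ((↥V.toFinset → Fin (m + 1)) × (Fin (m / 2) → Fin q))).card := by
    apply Finset.card_le_card_of_injOn F (fun _ _ => Finset.mem_univ _)
    intro u₁ hu₁ u₂ hu₂ hF12
    simp only [Finset.mem_coe, Finset.mem_filter] at hu₁ hu₂
    have h₁ := hu₁.2; have h₂ := hu₂.2
    set φ₁ := Classical.choose h₁ with hφ₁
    set φ₂ := Classical.choose h₂ with hφ₂
    obtain ⟨hne₁, he₁⟩ := Classical.choose_spec h₁
    obtain ⟨hne₂, he₂⟩ := Classical.choose_spec h₂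
    obtain ⟨hsum₁, hlen₁, hw₁, hs₁⟩ := inst_facts V q (m := m) hd (by simp) φ₁ he₁
    obtain ⟨hsum₂, hlen₂, hw₂, hs₂⟩ := inst_facts V q (m := m) hd (by simp) φ₂ he₂
    rw [hF] at hF12
    simp only [dif_pos h₁, dif_pos h₂, Prod.mk.injEq] at hF12
    have hc1 := hF12.1
    have hc2 := hF12.2
    -- equal lengths on letters of V
    have hlen : ∀ x ∈ V.toFinset, (φ₁ x).length = (φ₂ x).length := by
      intro x hx
      have := congrFun hc1 ⟨x, hx⟩
      simp only [Fin.mk.injEq] at this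
      change min (φ₁ x).length m = min (φ₂ x).length m at this
      have e1 := hlen₁ x hx; have e2 := hlen₂ x hx
      rwa [min_eq_left e1, min_eq_left e2] at this
    have hsum_eq : ∑ x ∈ V.toFinset, (φ₁ x).length = ∑ x ∈ V.toFinset, (φ₂ x).length :=
      Finset.sum_congr rfl hlen
    have hwl : (V.dedup.map φ₁).flatten.length = (V.dedup.map φ₂).flatten.length := by
      rw [hw₁, hw₂, hsum_eq]
    have hmemd : ∀ x ∈ V.dedup, x ∈ V.toFinset := fun x hx =>
      List.mem_toFinset.mpr (List.mem_dedup.mp hx)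
    have hww : (V.dedup.map φ₁).flatten = (V.dedup.map φ₂).flatten := by
      apply List.ext_getElem hwl
      intro t ht1 ht2
      have htm : t < m / 2 := lt_of_lt_of_le (by rw [hw₁] at ht1; exact lt_of_lt_of_le ht1 le_rfl) hs₁
      have := congrFun hc2 ⟨t, htm⟩
      rw [← hφ₁, ← hφ₂] at this
      rwa [List.getD_eq_getElem _ _ ht1, List.getD_eq_getElem _ _ ht2] at this
    have hmaps : V.dedup.map φ₁ = V.dedup.map φ₂ := by
      apply flatten_inj _ _ _ hww
      rw [List.map_map, List.map_map]
      exact List.map_congr_left (fun x hx => hlen x (hmemd x hx))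
    have hpt : ∀ x ∈ V, φ₁ x = φ₂ x := fun x hx =>
      List.map_inj_left.mp hmaps x (List.mem_dedup.mpr hx)
    have : List.ofFn u₁ = List.ofFn u₂ := by
      rw [he₁, he₂]
      congr 1
      exact List.map_congr_left hpt
    exact List.ofFn_injective this
  calc _ ≤ (Finset.univ : Finset ((↥V.toFinset → Fin (m + 1)) × (Fin (m / 2) → Fin q))).card := hcard
    _ = _ := by
      rw [Finset.card_univ, Fintype.card_prod, Fintype.card_fun, Fintype.card_fun,
        Fintype.card_fin, Fintype.card_fin, Fintype.card_fin, Fintype.card_coe]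



lemma Acount_pos {Γ : Type*} (V : List Γ) (q : ℕ) (hq : 2 ≤ q) :
    1 ≤ Acount V q V.length := by
  have hq0 : 0 < q := by omega
  have hrep : ∀ (l : List Γ), (l.map fun _ => [(⟨0, hq0⟩ : Fin q)]).flatten
      = List.replicate l.length (⟨0, hq0⟩ : Fin q) := by
    intro l
    induction l with
    | nil => rfl
    | cons a l ih => simp [ih, List.replicate_succ]
  have hinst : IsInstance V (List.ofFn fun _ : Fin V.length => (⟨0, hq0⟩ : Fin q)) := by
    refine ⟨fun _ => [⟨0, hq0⟩], fun x _ => by simp, ?_⟩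
    rw [hrep, List.ofFn_const]
  have : Nonempty {u : Fin V.length → Fin q // IsInstance V (List.ofFn u)} :=
    ⟨⟨_, hinst⟩⟩
  exact Nat.card_pos

lemma T_lower {Γ : Type*} (V : List Γ) (hV : V ≠ []) (q : ℕ) (hq : 2 ≤ q) (n : ℕ)
    (hn : V.length ≤ n) :
    (n - V.length + 1) * q ^ (n - V.length)
      ≤ ∑ W : Fin n → Fin q, instSubCount V (List.ofFn W) := by
  have hL1 : 1 ≤ V.length := List.length_pos_iff.mpr hV
  rw [sumT]
  set L := V.length with hL
  have hsub : (Finset.range (n - L + 1)).image (fun i => (i, i + L))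
      ⊆ (Finset.range (n + 1) ×ˢ Finset.range (n + 1)).filter (fun p => p.1 < p.2) := by
    intro p hp
    simp only [Finset.mem_image, Finset.mem_range] at hp
    obtain ⟨i, hi, rfl⟩ := hp
    simp only [Finset.mem_filter, Finset.mem_product, Finset.mem_range]
    omega
  have hinj : Set.InjOn (fun i => (i, i + L)) (Finset.range (n - L + 1)) := by
    intro a _ b _ hab
    simpa using congrArg Prod.fst hab
  calc (n - L + 1) * q ^ (n - L)
      = ∑ _i ∈ Finset.range (n - L + 1), 1 * q ^ (n - L) := by
        rw [Finset.sum_const, Finset.card_range]; ring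
    _ ≤ ∑ i ∈ Finset.range (n - L + 1), Acount V q L * q ^ (n - L) := by
        apply Finset.sum_le_sum
        intro i _
        exact Nat.mul_le_mul_right _ (Acount_pos V q hq)
    _ = ∑ p ∈ (Finset.range (n - L + 1)).image (fun i => (i, i + L)),
          Acount V q (p.2 - p.1) * q ^ (n - (p.2 - p.1)) := by
        rw [Finset.sum_image (fun a ha b hb hab => hinj ha hb hab)]
        apply Finset.sum_congr rfl
        intro i _
        simp [Nat.add_sub_cancel_left]
    _ ≤ _ := Finset.sum_le_sum_of_subset hsub

set_option maxHeartbeats 2000000 in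
lemma sum_bound (K : ℕ) (q : ℕ) (hq : 2 ≤ q) : ∃ C₀ : ℝ, 0 ≤ C₀ ∧ ∀ t : Finset ℕ,
    ∑ m ∈ t, ((m : ℝ) + 1) ^ K / (q : ℝ) ^ (m - m / 2) ≤ C₀ := by
  have hq1 : (1 : ℝ) < (q : ℝ) := by exact_mod_cast (by omega : 1 < q)
  set s : ℝ := Real.sqrt q with hs
  have hs1 : 1 < s := by
    rw [hs, show (1:ℝ) = Real.sqrt 1 by simp]
    exact Real.sqrt_lt_sqrt (by norm_num) hq1
  have hs0 : 0 < s := by linarith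
  set r : ℝ := s⁻¹ with hr
  have hr0 : 0 < r := by positivity
  have hr1 : r < 1 := by
    rw [hr, inv_lt_one_iff₀]; right; exact hs1
  set h : ℕ → ℝ := fun m => ((m : ℝ) + 1) ^ K * (s * r ^ m) with hh
  have hsummable : Summable h := by
    have h1 : Summable (fun m : ℕ => (m : ℝ) ^ K * r ^ m) :=
      summable_pow_mul_geometric_of_norm_lt_one K (by rwa [Real.norm_of_nonneg hr0.le])
    have h2 : Summable (fun m : ℕ => ((m + 1 : ℕ) : ℝ) ^ K * r ^ (m + 1)) :=
      (summable_nat_add_iff 1).mpr h1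
    have h3 : Summable (fun m : ℕ => (s * r⁻¹ * r) * (((m + 1 : ℕ) : ℝ) ^ K * r ^ m)) := by
      have := h2.mul_left (s * r⁻¹)
      apply Summable.congr this
      intro m
      rw [pow_succ]
      field_simp
    apply Summable.congr h3
    intro m
    have hrne : r ≠ 0 := ne_of_gt hr0
    push_cast
    field_simp
    ring
  refine ⟨∑' m, h m, tsum_nonneg (fun m => by positivity), fun t => ?_⟩
  have hle : ∀ m : ℕ, ((m : ℝ) + 1) ^ K / (q : ℝ) ^ (m - m / 2) ≤ h m := by
    intro m
    have hqs : (q : ℝ) = s ^ 2 := (Real.sq_sqrt (by positivity)).symm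
    have e1 : (q : ℝ) ^ (m - m / 2) = s ^ (2 * (m - m / 2)) := by
      rw [hqs, pow_mul]
    have e2 : s ^ (m - 1) ≤ s ^ (2 * (m - m / 2)) :=
      pow_le_pow_right₀ hs1.le (by omega)
    have e3 : s * r ^ m = s / s ^ m := by
      rw [hr, inv_pow, div_eq_mul_inv]
    have e4 : (1 : ℝ) / s ^ (m - 1) ≤ s / s ^ m := by
      rcases Nat.eq_zero_or_pos m with hm | hm
      · subst hm; simp; linarith
      · have : s ^ m = s ^ (m - 1) * s := by
          rw [← pow_succ]; congr 1; omega
        rw [this]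
        rw [div_le_div_iff₀ (by positivity) (by positivity)]
        calc 1 * (s ^ (m - 1) * s) = s * s ^ (m-1) := by ring
          _ ≤ _ := le_rfl
    calc ((m : ℝ) + 1) ^ K / (q : ℝ) ^ (m - m / 2)
        ≤ ((m : ℝ) + 1) ^ K / s ^ (m - 1) := by
          apply div_le_div_of_nonneg_left (by positivity) (by positivity)
          rw [e1]; exact e2
      _ = ((m : ℝ) + 1) ^ K * (1 / s ^ (m - 1)) := by ring
      _ ≤ ((m : ℝ) + 1) ^ K * (s / s ^ m) := by
          apply mul_le_mul_of_nonneg_left e4 (by positivity)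
      _ = h m := by rw [hh]; simp only []; rw [e3]
  calc ∑ m ∈ t, ((m : ℝ) + 1) ^ K / (q : ℝ) ^ (m - m / 2)
      ≤ ∑ m ∈ t, h m := Finset.sum_le_sum (fun m _ => hle m)
    _ ≤ ∑' m, h m := Summable.sum_le_tsum t (fun m _ => by positivity) hsummable

end Stmt17Aux

theorem stmt17 {Γ : Type*} [DecidableEq Γ] (V : List Γ) (hV : V ≠ []) (hd : Doubled V)
    (q : ℕ) (hq : 2 ≤ q) :
    ∃ c C : ℝ, 0 < c ∧ 0 < C ∧ ∃ N : ℕ, ∀ n : ℕ, N ≤ n →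
      c / n ≤ expDensity V q n ∧ expDensity V q n ≤ C * Real.log n / n := by
  classical
  obtain ⟨C₀, hC₀0, hC₀⟩ := Stmt17Aux.sum_bound V.toFinset.card q hq
  set L := V.length with hLdef
  have hL1 : 1 ≤ L := List.length_pos_iff.mpr hV
  have hqR : (1 : ℝ) < (q : ℝ) := by exact_mod_cast (by omega : 1 < q)
  have hqR0 : (0 : ℝ) < (q : ℝ) := by linarith
  refine ⟨1 / (2 * (q : ℝ) ^ L), 2 * C₀ + 1, by positivity, by positivity,
    max (2 * L) 3, fun n hn => ?_⟩
  have hn3 : 3 ≤ n := le_trans (le_max_right _ _) hn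
  have hnL : 2 * L ≤ n := le_trans (le_max_left _ _) hn
  have hn1R : (1 : ℝ) ≤ (n : ℝ) := by exact_mod_cast (by omega : 1 ≤ n)
  have hn0R : (0 : ℝ) < (n : ℝ) := by linarith
  have hB : (((n + 1).choose 2 : ℕ) : ℝ) = n * (n + 1) / 2 := by
    rw [Nat.cast_choose_two]; push_cast; ring
  have hBpos : (0 : ℝ) < (((n + 1).choose 2 : ℕ) : ℝ) := by rw [hB]; positivity
  have hqn : (0 : ℝ) < (q : ℝ) ^ n := by positivity
  set T : ℕ := ∑ W : Fin n → Fin q, instSubCount V (List.ofFn W) with hT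
  have hED : expDensity V q n = (T : ℝ) / (((n + 1).choose 2 : ℕ) : ℝ) / (q : ℝ) ^ n := by
    rw [expDensity]
    congr 1
    have : ∀ W : Fin n → Fin q, instDensity V (List.ofFn W)
        = (instSubCount V (List.ofFn W) : ℝ) / (((n + 1).choose 2 : ℕ) : ℝ) := by
      intro W
      rw [instDensity, List.length_ofFn]
    rw [Finset.sum_congr rfl (fun W _ => this W), ← Finset.sum_div, hT]
    push_cast
    ring
  constructor
  · -- lower bound
    have hTl : ((n - L + 1) * q ^ (n - L) : ℕ) ≤ T :=
      Stmt17Aux.T_lower V hV q hq n (by omega)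
    have hTlR : ((n : ℝ) - L + 1) * (q : ℝ) ^ (n - L) ≤ (T : ℝ) := by
      have := (Nat.cast_le (α := ℝ)).mpr hTl
      push_cast [Nat.cast_sub (by omega : L ≤ n)] at this
      convert this using 2
    have key : 1 / (2 * (q : ℝ) ^ L) / n
        ≤ ((n : ℝ) - L + 1) * (q : ℝ) ^ (n - L) / (((n + 1).choose 2 : ℕ) : ℝ) / (q : ℝ) ^ n := by
      rw [div_div, div_div, div_le_div_iff₀ (by positivity) (by positivity)]
      have hqsplit : (q : ℝ) ^ n = (q : ℝ) ^ L * (q : ℝ) ^ (n - L) := by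
        rw [← pow_add]; congr 1; omega
      have hLn : 2 * (L : ℝ) ≤ (n : ℝ) := by exact_mod_cast hnL
      have hqL : (0 : ℝ) < (q : ℝ) ^ L := by positivity
      have hqnL : (0 : ℝ) < (q : ℝ) ^ (n - L) := by positivity
      rw [hB, hqsplit]
      nlinarith [mul_pos hqL hqnL, mul_pos hn0R (mul_pos hqL hqnL)]
    rw [hED]
    refine le_trans key ?_
    gcongr
  · -- upper bound
    have hTu : (T : ℝ) ≤ (q : ℝ) ^ n * ((n + 1) * C₀) := by
      have hTeq : (T : ℝ) = ∑ p ∈ (Finset.range (n + 1) ×ˢ Finset.range (n + 1)).filter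
          (fun p => p.1 < p.2),
          (Stmt17Aux.Acount V q (p.2 - p.1) : ℝ) * (q : ℝ) ^ (n - (p.2 - p.1)) := by
        rw [hT, Stmt17Aux.sumT]
        push_cast
        rfl
      have hterm : ∀ p ∈ (Finset.range (n + 1) ×ˢ Finset.range (n + 1)).filter
          (fun p => p.1 < p.2),
          (Stmt17Aux.Acount V q (p.2 - p.1) : ℝ) * (q : ℝ) ^ (n - (p.2 - p.1))
            ≤ (q : ℝ) ^ n * (((p.2 - p.1 : ℕ) : ℝ) + 1) ^ V.toFinset.card
              / (q : ℝ) ^ ((p.2 - p.1) - (p.2 - p.1) / 2) := by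
        rintro ⟨i, j⟩ hp
        simp only [Finset.mem_filter, Finset.mem_product, Finset.mem_range] at hp
        set m := j - i with hm
        have hmn : m ≤ n := by omega
        have hA : (Stmt17Aux.Acount V q m : ℝ)
            ≤ ((m : ℝ) + 1) ^ V.toFinset.card * (q : ℝ) ^ (m / 2) := by
          have := (Nat.cast_le (α := ℝ)).mpr (Stmt17Aux.Am_bound V hd q hq m)
          push_cast at this
          exact this
        have hsplit : (q : ℝ) ^ (m / 2) * (q : ℝ) ^ (n - m)
            = (q : ℝ) ^ n / (q : ℝ) ^ (m - m / 2) := by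
          rw [eq_div_iff (by positivity), ← pow_add, ← pow_add]
          congr 1
          omega
        calc (Stmt17Aux.Acount V q m : ℝ) * (q : ℝ) ^ (n - m)
            ≤ ((m : ℝ) + 1) ^ V.toFinset.card * (q : ℝ) ^ (m / 2) * (q : ℝ) ^ (n - m) := by
              apply mul_le_mul_of_nonneg_right hA (by positivity)
          _ = (q : ℝ) ^ n * ((m : ℝ) + 1) ^ V.toFinset.card / (q : ℝ) ^ (m - m / 2) := by
              rw [mul_assoc, hsplit]; ring
      have hsum2 : ∑ p ∈ (Finset.range (n + 1) ×ˢ Finset.range (n + 1)).filter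
          (fun p => p.1 < p.2),
          (q : ℝ) ^ n * (((p.2 - p.1 : ℕ) : ℝ) + 1) ^ V.toFinset.card
            / (q : ℝ) ^ ((p.2 - p.1) - (p.2 - p.1) / 2)
          ≤ (q : ℝ) ^ n * ((n + 1) * C₀) := by
        have hre : ∀ p : ℕ × ℕ, (q : ℝ) ^ n * (((p.2 - p.1 : ℕ) : ℝ) + 1) ^ V.toFinset.card
            / (q : ℝ) ^ ((p.2 - p.1) - (p.2 - p.1) / 2)
            = (q : ℝ) ^ n * ((((p.2 - p.1 : ℕ) : ℝ) + 1) ^ V.toFinset.card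
              / (q : ℝ) ^ ((p.2 - p.1) - (p.2 - p.1) / 2)) := fun p => by ring
        rw [Finset.sum_congr rfl (fun p _ => hre p), ← Finset.mul_sum]
        apply mul_le_mul_of_nonneg_left ?_ (by positivity)
        rw [Finset.sum_filter, Finset.sum_product]
        have hinner : ∀ i : ℕ, (∑ j ∈ Finset.range (n + 1), if i < j then
            (((j - i : ℕ) : ℝ) + 1) ^ V.toFinset.card
              / (q : ℝ) ^ ((j - i) - (j - i) / 2) else 0) ≤ C₀ := by
          intro i
          rw [← Finset.sum_filter]
          have himg : ∑ j ∈ (Finset.range (n + 1)).filter (fun j => i < j),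
              (((j - i : ℕ) : ℝ) + 1) ^ V.toFinset.card / (q : ℝ) ^ ((j - i) - (j - i) / 2)
              = ∑ m ∈ ((Finset.range (n + 1)).filter (fun j => i < j)).image (fun j => j - i),
                ((m : ℝ) + 1) ^ V.toFinset.card / (q : ℝ) ^ (m - m / 2) := by
            rw [Finset.sum_image]
            intro a ha b hb hab
            simp only [Finset.coe_filter, Finset.mem_coe, Finset.mem_filter, Finset.mem_range, Set.mem_setOf_eq] at ha hb hab
            omega
          rw [himg]
          exact hC₀ _
        calc ∑ i ∈ Finset.range (n + 1), (∑ j ∈ Finset.range (n + 1), if i < j then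
              (((j - i : ℕ) : ℝ) + 1) ^ V.toFinset.card
                / (q : ℝ) ^ ((j - i) - (j - i) / 2) else 0)
            ≤ ∑ _i ∈ Finset.range (n + 1), C₀ := Finset.sum_le_sum (fun i _ => hinner i)
          _ = (n + 1) * C₀ := by rw [Finset.sum_const, Finset.card_range]; push_cast; ring
      rw [hTeq]
      exact le_trans (Finset.sum_le_sum hterm) hsum2
    have hlog : 1 ≤ Real.log n := by
      rw [Real.le_log_iff_exp_le hn0R]
      calc Real.exp 1 ≤ 2.7182818286 := Real.exp_one_lt_d9.le
        _ ≤ 3 := by norm_num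
        _ ≤ (n : ℝ) := by exact_mod_cast hn3
    rw [hED]
    have step1 : (T : ℝ) / (((n + 1).choose 2 : ℕ) : ℝ) / (q : ℝ) ^ n
        ≤ ((q : ℝ) ^ n * ((n + 1) * C₀)) / (((n + 1).choose 2 : ℕ) : ℝ) / (q : ℝ) ^ n := by
      gcongr
    refine le_trans step1 ?_
    rw [div_div, div_le_div_iff₀ (by positivity) hn0R]
    rw [hB]
    have hBX : (0 : ℝ) ≤ ((n : ℝ) * ((n : ℝ) + 1) / 2) * (q : ℝ) ^ n := by positivity
    have h1 : (2 * C₀ + 1) * 1 * (((n : ℝ) * ((n : ℝ) + 1) / 2) * (q : ℝ) ^ n)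
        ≤ (2 * C₀ + 1) * Real.log n * (((n : ℝ) * ((n : ℝ) + 1) / 2) * (q : ℝ) ^ n) := by
      apply mul_le_mul_of_nonneg_right ?_ hBX
      nlinarith [hlog, hC₀0]
    have h2 : (q : ℝ) ^ n * (((n : ℝ) + 1) * C₀) * n
        ≤ (2 * C₀ + 1) * 1 * (((n : ℝ) * ((n : ℝ) + 1) / 2) * (q : ℝ) ^ n) := by
      nlinarith [hBX]
    nlinarith [h1, h2]
end
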